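/- arXiv:math/0411429 — 3 statements merged into one kernel-verified Lean document; each statement's English description precedes it below -/
import Mathlib

section
/- Let w ∈ I(θ) and let s ∈ S be a right descent of w. Then the map M: v ↦ v·s̲ is a special matching on the Bruhat interval [e, w] ∩ I(θ): it is an involution on this interval such that for each x, either x covers M(x) or M(x) covers x, and for all x, y in the interval with y covering x and M(x) ≠ y, one has M(x) < M(y). -/
set_option linter.unusedSectionVars false

/-- `θ` maps simple reflections to simple reflections. -/
def PreservesSimples {B W : Type*} [Group W] {M : CoxeterMatrix B}
    (cs : CoxeterSystem M W) (θ : W ≃* W) : Prop :=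
  ∀ i : B, ∃ j : B, θ (cs.simple i) = cs.simple j

open Classical in
/-- The twisted action `w · s̲`. -/
noncomputable def twMul {B W : Type*} [Group W] {M : CoxeterMatrix B}
    (cs : CoxeterSystem M W) (θ : W ≃* W) (w : W) (i : B) : W :=
  if θ (cs.simple i) * w * cs.simple i = w then w * cs.simple i
  else θ (cs.simple i) * w * cs.simple i

/-- Action of a word of symbols. -/
noncomputable def twWord {B W : Type*} [Group W] {M : CoxeterMatrix B}
    (cs : CoxeterSystem M W) (θ : W ≃* W) (w : W) (l : List B) : W :=
  l.foldl (twMul cs θ) w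

/-- The Bruhat order on a Coxeter group: `v ≤ w` iff `w = v t₁ ⋯ tₖ` for
reflections `t₁, …, tₖ` with the lengths strictly increasing at each step. -/
def bruhatLE {B W : Type*} [Group W] {M : CoxeterMatrix B}
    (cs : CoxeterSystem M W) (v w : W) : Prop :=
  ∃ l : List W, (∀ t ∈ l, cs.IsReflection t) ∧ l.foldl (· * ·) v = w ∧
    ∀ k < l.length,
      cs.length ((l.take k).foldl (· * ·) v) <
        cs.length ((l.take (k + 1)).foldl (· * ·) v)

/-- The Bruhat interval `[e, w]` inside the twisted involutions `I(θ)`. -/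
def bruhatIntervalTI {B W : Type*} [Group W] {M : CoxeterMatrix B}
    (cs : CoxeterSystem M W) (θ : W ≃* W) (w : W) : Set W :=
  {x : W | θ x = x⁻¹ ∧ bruhatLE cs x w}

/-- `y` covers `x` in the poset `Br(I(θ))` restricted to the interval `[e, w]`. -/
def tiCovers {B W : Type*} [Group W] {M : CoxeterMatrix B}
    (cs : CoxeterSystem M W) (θ : W ≃* W) (w : W) (x y : W) : Prop :=
  x ∈ bruhatIntervalTI cs θ w ∧ y ∈ bruhatIntervalTI cs θ w ∧
    bruhatLE cs x y ∧ x ≠ y ∧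
    ∀ z ∈ bruhatIntervalTI cs θ w, bruhatLE cs x z → bruhatLE cs z y → z = x ∨ z = y

namespace SMaux

open List CoxeterSystem

variable {B W : Type*} [Group W] {M : CoxeterMatrix B} (cs : CoxeterSystem M W)

local prefix:100 "σ" => cs.simple
local prefix:100 "π" => cs.wordProd
local prefix:100 "ℓ" => cs.length

open Classical in
/-- count occurrences -/
noncomputable def cnt (t : W) (l : List W) : ℕ := l.countP (fun x => decide (x = t))

open Classical in
lemma cnt_cons (t a : W) (l : List W) :
    cnt t (a :: l) = (if a = t then 1 else 0) + cnt t l := by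
  unfold cnt
  rw [List.countP_cons]
  by_cases h : a = t <;> simp [h, Nat.add_comm]

open Classical in
lemma cnt_append (t : W) (l₁ l₂ : List W) :
    cnt t (l₁ ++ l₂) = cnt t l₁ + cnt t l₂ := List.countP_append

open Classical in
lemma cnt_pos_iff_mem (t : W) (l : List W) : 0 < cnt t l ↔ t ∈ l := by
  unfold cnt
  rw [List.countP_pos_iff]
  constructor
  · rintro ⟨a, ha, h⟩; simp at h; rwa [← h]
  · intro h; exact ⟨t, h, by simp⟩

open Classical in
lemma cnt_eq_zero_of_not_mem {t : W} {l : List W} (h : t ∉ l) : cnt t l = 0 := by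
  by_contra hc
  exact h ((cnt_pos_iff_mem t l).mp (Nat.pos_of_ne_zero hc))

open Classical in
lemma cnt_congr (t t' : W) (l : List W) (h : ∀ x, x = t ↔ x = t') : cnt t l = cnt t' l := by
  unfold cnt
  apply List.countP_congr
  intro x _
  simp [h x]

open Classical in
lemma cnt_map_conj (t c : W) (l : List W) :
    cnt t (l.map (fun x => c⁻¹ * x * c)) = cnt (c * t * c⁻¹) l := by
  unfold cnt
  rw [List.countP_map]
  apply List.countP_congr
  intro x _
  have hx : (c⁻¹ * x * c = t) ↔ (x = c * t * c⁻¹) := by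
    constructor
    · intro h
      rw [← h]
      simp [mul_assoc]
    · intro h
      rw [h]
      simp [mul_assoc]
  simp [Function.comp, hx]

open Classical in
lemma cnt_reverse (t : W) (l : List W) : cnt t l.reverse = cnt t l := by
  unfold cnt
  exact List.Perm.countP_eq _ (List.reverse_perm l)

open Classical in
/-- The Bourbaki permutation action on `W × Bool`. -/
noncomputable def fperm (i : B) : Equiv.Perm (W × Bool) :=
  Function.Involutive.toPerm
    (fun p => (σ i * p.1 * σ i, if p.1 = σ i then !p.2 else p.2))
    (by
      rintro ⟨t, b⟩
      have h1 : ∀ u : W, σ i * (σ i * u * σ i) * σ i = u := by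
        intro u
        simp only [mul_assoc]
        rw [cs.simple_mul_simple_self, mul_one, cs.simple_mul_simple_cancel_left]
      simp only
      rw [h1]
      congr 1
      have h2 : (σ i * t * σ i = σ i) ↔ (t = σ i) := by
        constructor
        · intro h
          have := h1 t
          rw [h] at this
          rw [← this, cs.simple_mul_simple_self, one_mul]
        · intro h
          rw [h, cs.simple_mul_simple_self, one_mul]
      by_cases h : t = σ i <;> simp [h, h2])

open Classical in
lemma fperm_apply (i : B) (t : W) (b : Bool) :
    fperm cs i (t, b) = (σ i * t * σ i, if t = σ i then !b else b) := rfl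

open Classical in
/-- Key computation: action of a word. -/
lemma fperm_word (ω : List B) (t : W) (b : Bool) :
    ((ω.map (fperm cs)).prod) (t, b) =
      (π ω * t * (π ω)⁻¹, xor (Nat.bodd (cnt t (cs.rightInvSeq ω))) b) := by
  induction ω generalizing b with
  | nil => simp [cnt]
  | cons i ω ih =>
    rw [List.map_cons, List.prod_cons]
    have hris : cs.rightInvSeq (i :: ω) = ((π ω)⁻¹ * σ i * π ω) :: cs.rightInvSeq ω := rfl
    rw [hris, cnt_cons]
    simp only [Equiv.Perm.coe_mul, Function.comp_apply, ih b]
    rw [fperm_apply]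
    have hfst : σ i * (π ω * t * (π ω)⁻¹) * σ i = π (i :: ω) * t * (π (i :: ω))⁻¹ := by
      rw [cs.wordProd_cons, mul_inv_rev, cs.inv_simple]
      simp [mul_assoc]
    have hcond : (π ω * t * (π ω)⁻¹ = σ i) ↔ ((π ω)⁻¹ * σ i * π ω = t) := by
      constructor
      · intro h
        rw [← h]
        simp [mul_assoc]
      · intro h
        rw [← h]
        simp [mul_assoc]
    rw [Prod.mk.injEq]
    refine ⟨hfst, ?_⟩
    by_cases h : (π ω)⁻¹ * σ i * π ω = t
    · rw [if_pos (hcond.mpr h), if_pos h, Nat.add_comm, Nat.bodd_succ]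
      cases hb : Nat.bodd (cnt t (cs.rightInvSeq ω)) <;> cases b <;> simp [hb]
    · rw [if_neg (fun hh => h (hcond.mp hh)), if_neg h]
      simp

/-- The word `[i, i', i, i', ...]` of length `2*m`. -/
def Jw (i i' : B) : ℕ → List B
  | 0 => []
  | m + 1 => i :: i' :: Jw i i' m

lemma Jw_wordProd (i i' : B) (m : ℕ) : π (Jw i i' m) = (σ i * σ i') ^ m := by
  induction m with
  | zero => simp [Jw]
  | succ m ih =>
    rw [Jw, cs.wordProd_cons, cs.wordProd_cons, ih, pow_succ']
    simp [mul_assoc]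

lemma Jw_fperm_prod (i i' : B) (m : ℕ) :
    (((Jw i i' m)).map (fperm cs)).prod = (fperm cs i * fperm cs i') ^ m := by
  induction m with
  | zero => simp [Jw]
  | succ m ih =>
    rw [Jw, List.map_cons, List.map_cons, List.prod_cons, List.prod_cons, ih, pow_succ']
    simp [mul_assoc]

lemma dih_swap (x y : W) (m : ℕ) : y * (x * y) ^ m = (y * x) ^ m * y := by
  induction m with
  | zero => simp
  | succ m ih =>
    rw [pow_succ', pow_succ']
    calc y * (x * y * (x * y) ^ m) = (y * x) * (y * (x * y) ^ m) := by simp [mul_assoc]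
      _ = (y * x) * ((y * x) ^ m * y) := by rw [ih]
      _ = y * x * (y * x) ^ m * y := by simp [mul_assoc]

lemma dih_inv {x y : W} (hx : x * x = 1) (hy : y * y = 1) (m : ℕ) :
    ((x * y) ^ m)⁻¹ = (y * x) ^ m := by
  rw [← inv_pow, mul_inv_rev, inv_eq_of_mul_eq_one_right hx, inv_eq_of_mul_eq_one_right hy]

lemma dih_snd {x y : W} (hx : x * x = 1) (hy : y * y = 1) (m : ℕ) :
    ((x * y) ^ m)⁻¹ * y * (x * y) ^ m = (y * x) ^ (2 * m) * y := by
  rw [dih_inv hx hy, mul_assoc, dih_swap, ← mul_assoc, ← pow_add]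
  congr 2
  ring

lemma dih_head {x y : W} (hx : x * x = 1) (hy : y * y = 1) (m : ℕ) :
    (y * (x * y) ^ m)⁻¹ * x * (y * (x * y) ^ m) = (y * x) ^ (2 * m + 1) * y := by
  have hyi : y⁻¹ = y := inv_eq_of_mul_eq_one_right hy
  rw [mul_inv_rev, dih_inv hx hy, hyi, dih_swap]
  calc (y * x) ^ m * y * x * ((y * x) ^ m * y)
      = (y * x) ^ m * ((y * x) * (y * x) ^ m) * y := by simp [mul_assoc]
    _ = (y * x) ^ m * (y * x) ^ (m + 1) * y := by rw [← pow_succ']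
    _ = (y * x) ^ (2 * m + 1) * y := by rw [← pow_add]; congr 2; ring

lemma Jw_rightInvSeq (i i' : B) (m : ℕ) :
    cs.rightInvSeq (Jw i i' m) =
      ((List.range (2 * m)).reverse).map (fun a => (σ i' * σ i) ^ a * σ i') := by
  have hx := cs.simple_mul_simple_self i
  have hy := cs.simple_mul_simple_self i'
  induction m with
  | zero => simp [Jw]
  | succ m ih =>
    have hrev : (List.range (2 * (m + 1))).reverse =
        (2 * m + 1) :: (2 * m) :: (List.range (2 * m)).reverse := by
      have h1 : 2 * (m + 1) = (2 * m + 1) + 1 := by ring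
      rw [h1, List.range_succ, List.range_succ]
      simp
    rw [hrev]
    have hJ : cs.rightInvSeq (Jw i i' (m + 1)) =
        ((π (i' :: Jw i i' m))⁻¹ * σ i * π (i' :: Jw i i' m)) ::
        ((π (Jw i i' m))⁻¹ * σ i' * π (Jw i i' m)) :: cs.rightInvSeq (Jw i i' m) := rfl
    rw [hJ, ih, List.map_cons, List.map_cons]
    congr 1
    · rw [cs.wordProd_cons, Jw_wordProd]
      exact dih_head hx hy m
    congr 1
    · rw [Jw_wordProd]
      exact dih_snd hx hy m

open Classical in
lemma Jw_cnt_even (i i' : B) (t : W) :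
    Even (cnt t (cs.rightInvSeq (Jw i i' (M i i')))) := by
  rw [Jw_rightInvSeq]
  set m := M i i' with hm
  unfold cnt
  rw [List.countP_map]
  rw [List.Perm.countP_eq _ (List.reverse_perm (List.range (2 * m)))]
  rw [show 2 * m = m + m from by ring, List.range_add, List.countP_append, List.countP_map]
  have hq : (σ i' * σ i) ^ m = 1 := cs.simple_mul_simple_pow' i i'
  have key : ∀ a : ℕ, ((σ i' * σ i) ^ (m + a) * σ i' = t) ↔ ((σ i' * σ i) ^ a * σ i' = t) := by
    intro a
    rw [pow_add, hq, one_mul]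
  have h2 : List.countP (((fun x => decide (x = t)) ∘ fun a => (σ i' * σ i) ^ a * σ i') ∘
        fun x => m + x) (List.range m) =
      List.countP ((fun x => decide (x = t)) ∘ fun a => (σ i' * σ i) ^ a * σ i')
        (List.range m) := by
    apply List.countP_congr
    intro a _
    simp [Function.comp, key a]
  rw [h2]
  exact Even.add_self _

open Classical in
lemma fperm_liftable : M.IsLiftable (fperm cs) := by
  intro i i'
  apply Equiv.ext
  rintro ⟨t, b⟩
  rw [← Jw_fperm_prod, fperm_word]
  have heven := Jw_cnt_even cs i i' t
  rw [Nat.even_iff] at heven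
  have hb : Nat.bodd (cnt t (cs.rightInvSeq (Jw i i' (M i i')))) = false := by
    cases hbb : Nat.bodd (cnt t (cs.rightInvSeq (Jw i i' (M i i')))) with
    | false => rfl
    | true =>
      exfalso
      rw [Nat.mod_two_of_bodd, hbb] at heven
      simp at heven
  rw [Jw_wordProd, cs.simple_mul_simple_pow, hb]
  simp

open Classical in
/-- The representation `W →* Perm (W × Bool)`. -/
noncomputable def phiRep : W →* Equiv.Perm (W × Bool) :=
  cs.lift ⟨fperm cs, fperm_liftable cs⟩

open Classical in
lemma phiRep_wordProd (ω : List B) : phiRep cs (π ω) = ((ω.map (fperm cs))).prod := by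
  have hw : π ω = (ω.map cs.simple).prod := rfl
  unfold phiRep
  rw [hw, map_list_prod]
  congr 1
  rw [List.map_map]
  apply List.map_congr_left
  intro i _
  simp [cs.lift_apply_simple]

open Classical in
/-- Parity of the count of `t` in the right inversion sequence only depends on the product. -/
lemma cnt_parity_invariant {ω₁ ω₂ : List B} (h : π ω₁ = π ω₂) (t : W) :
    Nat.bodd (cnt t (cs.rightInvSeq ω₁)) = Nat.bodd (cnt t (cs.rightInvSeq ω₂)) := by
  have h1 := fperm_word cs ω₁ t false
  have h2 := fperm_word cs ω₂ t false
  rw [← phiRep_wordProd] at h1 h2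
  rw [h] at h1
  rw [h1] at h2
  have := congrArg Prod.snd h2
  simpa using this

lemma ris_append (ω₁ ω₂ : List B) :
    cs.rightInvSeq (ω₁ ++ ω₂) =
      (cs.rightInvSeq ω₁).map (fun x => (π ω₂)⁻¹ * x * π ω₂) ++ cs.rightInvSeq ω₂ := by
  induction ω₁ with
  | nil => simp
  | cons i ω₁ ih =>
    have h1 : cs.rightInvSeq ((i :: ω₁) ++ ω₂) =
        ((π (ω₁ ++ ω₂))⁻¹ * σ i * π (ω₁ ++ ω₂)) :: cs.rightInvSeq (ω₁ ++ ω₂) := rfl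
    have h2 : cs.rightInvSeq (i :: ω₁) = ((π ω₁)⁻¹ * σ i * π ω₁) :: cs.rightInvSeq ω₁ := rfl
    rw [h1, h2, ih, List.map_cons]
    congr 1
    rw [cs.wordProd_append, mul_inv_rev]
    simp [mul_assoc]

lemma lis_eq_map_conj (ω : List B) :
    cs.leftInvSeq ω = (cs.rightInvSeq ω).map (fun x => π ω * x * (π ω)⁻¹) := by
  induction ω with
  | nil => simp
  | cons i ω ih =>
    have h1 : cs.leftInvSeq (i :: ω) =
        σ i :: (cs.leftInvSeq ω).map (fun x => σ i * x * (σ i)⁻¹) := by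
      show _ = σ i :: (cs.leftInvSeq ω).map (MulAut.conj (σ i))
      rfl
    have h2 : cs.rightInvSeq (i :: ω) = ((π ω)⁻¹ * σ i * π ω) :: cs.rightInvSeq ω := rfl
    rw [h1, h2, ih, List.map_cons, List.map_map]
    congr 1
    · rw [cs.wordProd_cons, mul_inv_rev, cs.inv_simple]
      simp [mul_assoc, cs.simple_mul_simple_cancel_left]
    · apply List.map_congr_left
      intro x _
      rw [cs.wordProd_cons, mul_inv_rev, cs.inv_simple]
      simp [mul_assoc]

open Classical in
lemma cnt_odd_of_reflection_word {t : W} (ht : cs.IsReflection t) (ω : List B)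
    (hω : π ω = t) : Nat.bodd (cnt t (cs.rightInvSeq ω)) = true := by
  obtain ⟨u, i, htu⟩ := ht
  obtain ⟨μ, hμ⟩ := cs.wordProd_surjective u
  -- special word : μ ++ [i] ++ μ.reverse
  have hτ : π (μ ++ ([i] ++ μ.reverse)) = t := by
    rw [cs.wordProd_append, cs.wordProd_append, cs.wordProd_reverse, hμ,
      cs.wordProd_singleton, htu, ← mul_assoc]
  rw [cnt_parity_invariant cs (hω.trans hτ.symm) t]
  rw [ris_append, ris_append, cnt_append, cnt_append]
  have hπB : π ([i] ++ μ.reverse) = σ i * u⁻¹ := by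
    rw [cs.wordProd_append, cs.wordProd_reverse, hμ, cs.wordProd_singleton]
  -- first piece
  have hc : (σ i * u⁻¹) * t * (σ i * u⁻¹)⁻¹ = σ i := by
    rw [htu]
    simp [mul_inv_rev, cs.inv_simple, mul_assoc, cs.simple_mul_simple_self]
  have e1 : cnt t ((cs.rightInvSeq μ).map (fun x => (π ([i] ++ μ.reverse))⁻¹ * x *
      π ([i] ++ μ.reverse))) = cnt (σ i) (cs.rightInvSeq μ) := by
    rw [cnt_map_conj, hπB, hc]
  -- middle piece
  have e2 : cnt t ((cs.rightInvSeq [i]).map (fun x => (π μ.reverse)⁻¹ * x * π μ.reverse)) = 1 := by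
    rw [cs.rightInvSeq_singleton, List.map_singleton, cs.wordProd_reverse, hμ]
    rw [show (u⁻¹)⁻¹ * σ i * u⁻¹ = t from by rw [htu]; simp [mul_assoc]]
    rw [cnt_cons]
    simp [cnt]
  -- last piece
  have e3 : cnt t (cs.rightInvSeq μ.reverse) = cnt (σ i) (cs.rightInvSeq μ) := by
    rw [cs.rightInvSeq_reverse, cnt_reverse, lis_eq_map_conj]
    have : ∀ x : W, (π μ * x * (π μ)⁻¹ = t) ↔ (x = σ i) := by
      intro x
      rw [hμ, htu]
      constructor
      · intro h
        have := congrArg (fun z => u⁻¹ * z * u) h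
        simpa [mul_assoc] using this
      · intro h
        rw [h]
    unfold cnt
    rw [List.countP_map]
    apply List.countP_congr
    intro x _
    simp [Function.comp, this x]
  rw [e1, e2, e3]
  rw [show cnt (σ i) (cs.rightInvSeq μ) + (1 + cnt (σ i) (cs.rightInvSeq μ)) =
    2 * cnt (σ i) (cs.rightInvSeq μ) + 1 from by ring]
  simp [Nat.bodd_add, Nat.bodd_mul]

open Classical in
lemma mem_ris_of_isRightInversion {ω : List B} (hω : cs.IsReduced ω) {t : W}
    (ht : cs.IsRightInversion (π ω) t) : t ∈ cs.rightInvSeq ω := by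
  obtain ⟨href, hlen⟩ := ht
  -- choose a reduced word for π ω * t and a word for t
  obtain ⟨η, hηred, hη⟩ := cs.exists_reduced_word' (π ω * t)
  obtain ⟨τ, hτ⟩ := cs.wordProd_surjective t
  have hprod : π (η ++ τ) = π ω := by
    rw [cs.wordProd_append, ← hη, ← hτ, mul_assoc, hτ, href.mul_self, mul_one]
  have hpar := cnt_parity_invariant cs hprod t
  rw [ris_append, cnt_append] at hpar
  have e1 : cnt t ((cs.rightInvSeq η).map (fun x => (π τ)⁻¹ * x * π τ)) =
      cnt t (cs.rightInvSeq η) := by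
    rw [cnt_map_conj, hτ, mul_inv_cancel_right]
  have e2 : cnt t (cs.rightInvSeq η) = 0 := by
    apply cnt_eq_zero_of_not_mem
    intro hmem
    have hinv := cs.isRightInversion_of_mem_rightInvSeq hηred hmem
    rw [← hη] at hinv
    have h2 := hinv.2
    rw [mul_assoc, href.mul_self, mul_one] at h2
    omega
  have e3 := cnt_odd_of_reflection_word cs href τ hτ
  rw [e1, e2] at hpar
  have : Nat.bodd (cnt t (cs.rightInvSeq ω)) = true := by
    rw [← hpar]
    simpa using e3
  rcases Nat.eq_zero_or_pos (cnt t (cs.rightInvSeq ω)) with hz | hp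
  · rw [hz] at this
    simp at this
  · exact (cnt_pos_iff_mem t _).mp hp

/-- Strong exchange property (right version). -/
theorem strong_exchange {ω : List B} (hω : cs.IsReduced ω) {t : W}
    (href : cs.IsReflection t) (hlen : ℓ (π ω * t) < ℓ (π ω)) :
    ∃ j < ω.length, π ω * t = π (ω.eraseIdx j) := by
  have hmem := mem_ris_of_isRightInversion cs hω ⟨href, hlen⟩
  obtain ⟨j, hj, hget⟩ := List.mem_iff_getElem.mp hmem
  rw [cs.length_rightInvSeq] at hj
  refine ⟨j, hj, ?_⟩
  rw [← cs.wordProd_mul_getD_rightInvSeq ω j]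
  congr 1
  rw [← hget, List.getD_eq_getElem _ 1 (by rwa [cs.length_rightInvSeq])]

/-- One step of the Bruhat chain relation. -/
def bstep (u v : W) : Prop := ∃ t, cs.IsReflection t ∧ v = u * t ∧ ℓ u < ℓ v

lemma ble_refl (u : W) : bruhatLE cs u u := ⟨[], by simp, by simp, by simp⟩

lemma ble_tail {u v w : W} (h : bruhatLE cs u v) (hs : bstep cs v w) : bruhatLE cs u w := by
  obtain ⟨l, h1, h2, h3⟩ := h
  obtain ⟨t, ht, rfl, hlt⟩ := hs
  refine ⟨l ++ [t], ?_, ?_, ?_⟩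
  · intro x hx
    rcases List.mem_append.mp hx with hx | hx
    · exact h1 x hx
    · simp at hx
      rwa [hx]
  · rw [List.foldl_append, h2]
    simp
  · intro k hk
    rw [List.length_append, List.length_singleton] at hk
    rcases Nat.lt_or_ge k l.length with hk1 | hk1
    · rw [List.take_append_of_le_length (by omega), List.take_append_of_le_length (by omega)]
      exact h3 k hk1
    · have hkeq : k = l.length := by omega
      subst hkeq
      rw [List.take_append_of_le_length (le_refl _), List.take_of_length_le (le_refl _),
        show l.length + 1 = l.length + 1 from rfl]
      rw [show (l ++ [t]).take (l.length + 1) = l ++ [t] from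
        List.take_of_length_le (by simp)]
      rw [List.foldl_append, h2]
      simpa using hlt

lemma ble_iff_rtg {u v : W} : bruhatLE cs u v ↔ Relation.ReflTransGen (bstep cs) u v := by
  constructor
  · rintro ⟨l, h1, h2, h3⟩
    induction l generalizing u with
    | nil => simp at h2; rw [h2]
    | cons t l ih =>
      have hstep : bstep cs u (u * t) := by
        refine ⟨t, h1 t (by simp), rfl, ?_⟩
        have := h3 0 (by simp)
        simpa using this
      refine Relation.ReflTransGen.head hstep (ih ?_ ?_ ?_)
      · intro x hx
        exact h1 x (by simp [hx])
      · simpa using h2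
      · intro k hk
        have := h3 (k + 1) (by simpa using Nat.succ_lt_succ hk)
        simpa [List.take_succ_cons] using this
  · intro h
    induction h with
    | refl => exact ble_refl cs u
    | tail h1 h2 ih => exact ble_tail cs ih h2

lemma ble_trans {u v w : W} (h1 : bruhatLE cs u v) (h2 : bruhatLE cs v w) :
    bruhatLE cs u w := by
  rw [ble_iff_rtg] at *
  exact h1.trans h2

lemma ble_step {u : W} {t : W} (ht : cs.IsReflection t) (hl : ℓ u < ℓ (u * t)) :
    bruhatLE cs u (u * t) := by
  rw [ble_iff_rtg]
  exact Relation.ReflTransGen.single ⟨t, ht, rfl, hl⟩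

lemma ble_length {u v : W} (h : bruhatLE cs u v) : ℓ u ≤ ℓ v := by
  rw [ble_iff_rtg] at h
  induction h with
  | refl => exact le_refl _
  | tail h1 h2 ih =>
    obtain ⟨t, ht, rfl, hlt⟩ := h2
    omega

lemma ble_eq_of_length_ge {u v : W} (h : bruhatLE cs u v) (hl : ℓ v ≤ ℓ u) : u = v := by
  have h' := h
  rw [ble_iff_rtg] at h'
  rcases Relation.ReflTransGen.cases_tail h' with rfl | ⟨b, hub, hbv⟩
  · rfl
  · exfalso
    obtain ⟨t, ht, rfl, hlt⟩ := hbv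
    have : ℓ u ≤ ℓ b := ble_length cs ((ble_iff_rtg cs).mpr hub)
    omega

lemma ble_antisymm {u v : W} (h1 : bruhatLE cs u v) (h2 : bruhatLE cs v u) : u = v :=
  ble_eq_of_length_ge cs h1 (ble_length cs h2)

lemma ble_inv {u v : W} (h : bruhatLE cs u v) : bruhatLE cs u⁻¹ v⁻¹ := by
  rw [ble_iff_rtg] at *
  induction h with
  | refl => exact Relation.ReflTransGen.refl
  | @tail b c h1 h2 ih =>
    obtain ⟨t, ht, rfl, hlt⟩ := h2
    refine ih.tail ⟨b * t * b⁻¹, ht.conj b, ?_, ?_⟩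
    · rw [mul_inv_rev, ht.inv]
      simp [mul_assoc]
    · rw [cs.length_inv, cs.length_inv]
      exact hlt

/-- Deletion property: every word has a reduced subword with the same product. -/
lemma deletion : ∀ n : ℕ, ∀ ω : List B, ω.length ≤ n →
    ∃ ρ, ρ.Sublist ω ∧ cs.IsReduced ρ ∧ π ρ = π ω := by
  intro n
  induction n using Nat.strong_induction_on with
  | _ n ihn =>
  intro ω hω
  by_cases hred : cs.IsReduced ω
  · exact ⟨ω, List.Sublist.refl ω, hred, rfl⟩
  rcases List.eq_nil_or_concat ω with rfl | ⟨ζ, i, rfl⟩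
  · exact absurd (by simp [CoxeterSystem.IsReduced]) hred
  simp only [List.concat_eq_append] at hω hred ⊢
  have hζn : ζ.length < n := by
    simp at hω
    omega
  obtain ⟨ρ₀, hsub₀, hred₀, hπ₀⟩ := ihn ζ.length hζn ζ (le_refl _)
  have hπω : π (ζ ++ [i]) = π ζ * σ i := by
    rw [cs.wordProd_append, cs.wordProd_singleton]
  rcases Nat.lt_or_ge (ℓ (π ζ)) (ℓ (π ζ * σ i)) with hasc | hdesc
  · refine ⟨ρ₀ ++ [i], hsub₀.append (List.Sublist.refl [i]), ?_, ?_⟩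
    · show ℓ (π (ρ₀ ++ [i])) = _
      rw [cs.wordProd_append, cs.wordProd_singleton, hπ₀, List.length_append,
        List.length_singleton]
      have h1 : ℓ (π ζ * σ i) = ℓ (π ζ) + 1 := by
        rcases cs.length_mul_simple (π ζ) i with h | h <;> omega
      have hr : ℓ (π ρ₀) = ρ₀.length := hred₀
      rw [h1, ← hπ₀, hr]
    · rw [cs.wordProd_append, cs.wordProd_singleton, hπ₀, hπω]
  · have hlt : ℓ (π ρ₀ * σ i) < ℓ (π ρ₀) := by
      rw [hπ₀]
      rcases Nat.lt_or_ge (ℓ (π ζ * σ i)) (ℓ (π ζ)) with h | h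
      · exact h
      · exfalso
        have := cs.length_mul_simple_ne (π ζ) i
        omega
    obtain ⟨j, hj, heq⟩ := strong_exchange cs hred₀ (cs.isReflection_simple i) hlt
    have hlen : (ρ₀.eraseIdx j).length < n := by
      have h1 := List.length_eraseIdx_add_one hj
      have h2 := hsub₀.length_le
      omega
    obtain ⟨ρ, hsub, hredρ, hπρ⟩ := ihn (ρ₀.eraseIdx j).length hlen (ρ₀.eraseIdx j) (le_refl _)
    refine ⟨ρ, ?_, hredρ, ?_⟩
    · exact (hsub.trans (List.eraseIdx_sublist ρ₀ j)).trans
        (hsub₀.trans (List.sublist_append_left ζ [i]))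
    · rw [hπρ, ← heq, hπ₀, hπω]

/-- Subword property (one direction): if `x ≤ y` then every reduced word for `y` has a
reduced subword which is a word for `x`. -/
lemma subword_of_ble {x y : W} (h : bruhatLE cs x y) :
    ∀ ω : List B, cs.IsReduced ω → π ω = y →
      ∃ ω', ω'.Sublist ω ∧ cs.IsReduced ω' ∧ π ω' = x := by
  rw [ble_iff_rtg] at h
  induction h with
  | refl => exact fun ω h1 h2 => ⟨ω, List.Sublist.refl ω, h1, h2⟩
  | @tail b c h1 h2 ih =>
    intro ω hred hπ
    obtain ⟨t, ht, rfl, hlt⟩ := h2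
    have hlen : ℓ (π ω * t) < ℓ (π ω) := by
      rw [hπ, mul_assoc, ht.mul_self, mul_one]
      exact hlt
    obtain ⟨j, hj, heq⟩ := strong_exchange cs hred ht hlen
    have hπe : π (ω.eraseIdx j) = b := by
      rw [← heq, hπ, mul_assoc, ht.mul_self, mul_one]
    obtain ⟨ρ, hsub, hredρ, hπρ⟩ := deletion cs (ω.eraseIdx j).length (ω.eraseIdx j) (le_refl _)
    obtain ⟨ω', hsub', hred', hπ'⟩ := ih ρ hredρ (hπρ.trans hπe)
    exact ⟨ω', (hsub'.trans hsub).trans (List.eraseIdx_sublist ω j), hred', hπ'⟩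

/-- The big mutual induction: subword property (other direction), ascent-multiplication,
and one lifting property. -/
theorem pack : ∀ n : ℕ,
    (∀ ω : List B, cs.IsReduced ω → ω.length ≤ n → ∀ ω' : List B, ω'.Sublist ω →
      bruhatLE cs (π ω') (π ω)) ∧
    (∀ u v : W, ∀ i : B, bruhatLE cs u v → ℓ v ≤ n → ℓ u < ℓ (u * σ i) →
      ℓ v < ℓ (v * σ i) → bruhatLE cs (u * σ i) (v * σ i)) ∧
    (∀ u w : W, ∀ i : B, bruhatLE cs u w → ℓ w ≤ n → ℓ (w * σ i) < ℓ w →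
      ℓ u < ℓ (u * σ i) → bruhatLE cs u (w * σ i)) := by
  intro n
  induction n using Nat.strong_induction_on with
  | _ n ih =>
  refine ⟨?_, ?_, ?_⟩
  · -- Sub
    intro ω hred hn ω' hsub
    rcases List.eq_nil_or_concat ω with rfl | ⟨ζ, i, rfl⟩
    · rw [List.sublist_nil.mp hsub]
      exact ble_refl cs _
    simp only [List.concat_eq_append] at hred hn hsub ⊢
    have hπω : π (ζ ++ [i]) = π ζ * σ i := by
      rw [cs.wordProd_append, cs.wordProd_singleton]
    have hζred : cs.IsReduced ζ := by
      have := hred.take (ζ.length)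
      rwa [List.take_left] at this
    have hζlen : ℓ (π ζ) = ζ.length := hζred
    have hωlen : ℓ (π (ζ ++ [i])) = ζ.length + 1 := by
      have : ℓ (π (ζ ++ [i])) = (ζ ++ [i]).length := hred
      simpa using this
    have hvasc : ℓ (π ζ) < ℓ (π ζ * σ i) := by
      rw [← hπω, hζlen, hωlen]
      omega
    have hζn : ζ.length < n := by
      have : (ζ ++ [i]).length ≤ n := hn
      simp at this
      omega
    have hstep : bruhatLE cs (π ζ) (π (ζ ++ [i])) := by
      rw [hπω]
      exact ble_step cs (cs.isReflection_simple i) hvasc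
    obtain ⟨l₁, l₂, rfl, hl₁, hl₂⟩ := List.sublist_append_iff.mp hsub
    rcases List.sublist_singleton.mp hl₂ with rfl | rfl
    · have : bruhatLE cs (π (l₁ ++ [])) (π ζ) := by
        simpa using (ih ζ.length hζn).1 ζ hζred (le_refl _) l₁ hl₁
      exact ble_trans cs this hstep
    · have hul : bruhatLE cs (π l₁) (π ζ) := (ih ζ.length hζn).1 ζ hζred (le_refl _) l₁ hl₁
      have hπ' : π (l₁ ++ [i]) = π l₁ * σ i := by
        rw [cs.wordProd_append, cs.wordProd_singleton]
      rw [hπ', hπω]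
      by_cases hasc : ℓ (π l₁) < ℓ (π l₁ * σ i)
      · exact (ih ζ.length hζn).2.1 (π l₁) (π ζ) i hul (le_of_eq hζlen) hasc hvasc
      · have hd : ℓ (π l₁ * σ i) < ℓ (π l₁) := by
          have := cs.length_mul_simple_ne (π l₁) i
          omega
        have hdown : bruhatLE cs (π l₁ * σ i) (π l₁) := by
          have := ble_step cs (cs.isReflection_simple i) (u := π l₁ * σ i) (by
            rwa [cs.simple_mul_simple_cancel_right])
          rwa [cs.simple_mul_simple_cancel_right] at this
        exact ble_trans cs hdown (ble_trans cs hul (ble_step cs (cs.isReflection_simple i) hvasc))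
  · -- Lmul
    intro u v i huv hn hu hv
    rcases Relation.ReflTransGen.cases_tail ((ble_iff_rtg cs).mp huv) with heq | ⟨v₁, hv₁, hstep⟩
    · rw [heq]
      exact ble_refl cs _
    obtain ⟨t, ht, rfl, hlt⟩ := hstep
    have hv₁n : ℓ v₁ < n := lt_of_lt_of_le hlt hn
    have hv₁le : bruhatLE cs u v₁ := (ble_iff_rtg cs).mpr hv₁
    by_cases h1 : ℓ v₁ < ℓ (v₁ * σ i)
    · have h2 : bruhatLE cs (u * σ i) (v₁ * σ i) :=
        (ih (ℓ v₁) hv₁n).2.1 u v₁ i hv₁le (le_refl _) hu h1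
      have h3 : bruhatLE cs (v₁ * σ i) (v₁ * t * σ i) := by
        have hrefl : cs.IsReflection (σ i * t * σ i) := by
          have := ht.conj (σ i)
          rwa [cs.inv_simple] at this
        have heq2 : v₁ * σ i * (σ i * t * σ i) = v₁ * t * σ i := by
          simp [mul_assoc, cs.simple_mul_simple_cancel_left]
        have hlen2 : ℓ (v₁ * σ i) < ℓ (v₁ * σ i * (σ i * t * σ i)) := by
          rw [heq2]
          have e1 : ℓ (v₁ * σ i) = ℓ v₁ + 1 := by
            rcases cs.length_mul_simple v₁ i with h | h <;> omega
          omega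
        have := ble_step cs hrefl hlen2
        rwa [heq2] at this
      exact ble_trans cs h2 h3
    · have hd : ℓ (v₁ * σ i) < ℓ v₁ := by
        have := cs.length_mul_simple_ne v₁ i
        omega
      have ha : bruhatLE cs u (v₁ * σ i) :=
        (ih (ℓ v₁) hv₁n).2.2 u v₁ i hv₁le (le_refl _) hd hu
      have hb : bruhatLE cs (u * σ i) (v₁ * σ i * σ i) := by
        apply (ih (ℓ (v₁ * σ i)) (by omega)).2.1 u (v₁ * σ i) i ha (le_refl _) hu
        rw [cs.simple_mul_simple_cancel_right]
        exact hd
      rw [cs.simple_mul_simple_cancel_right] at hb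
      have hc : bruhatLE cs v₁ (v₁ * t) := ble_step cs ht hlt
      have hdd : bruhatLE cs (v₁ * t) (v₁ * t * σ i) := ble_step cs (cs.isReflection_simple i) hv
      exact ble_trans cs hb (ble_trans cs hc hdd)
  · -- LiftIII
    intro u w i huw hn hdesc hasc
    obtain ⟨ζ, hζred, hζ⟩ := cs.exists_reduced_word' (w * σ i)
    have hπω : π (ζ ++ [i]) = w := by
      rw [cs.wordProd_append, cs.wordProd_singleton, ← hζ, cs.simple_mul_simple_cancel_right]
    have hwlen : ℓ w = ℓ (w * σ i) + 1 := by
      rcases cs.length_mul_simple w i with h | h <;> omega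
    have hred : cs.IsReduced (ζ ++ [i]) := by
      show ℓ (π (ζ ++ [i])) = _
      rw [hπω, List.length_append, List.length_singleton]
      have : ℓ (w * σ i) = ζ.length := by rw [hζ]; exact hζred
      omega
    obtain ⟨ω', hsub, hω'red, hω'π⟩ := subword_of_ble cs huw (ζ ++ [i]) hred hπω
    obtain ⟨l₁, l₂, rfl, hl₁, hl₂⟩ := List.sublist_append_iff.mp hsub
    rcases List.sublist_singleton.mp hl₂ with rfl | rfl
    · have hζn : ℓ (w * σ i) < n := by omega
      have hζlen : ζ.length = ℓ (w * σ i) := by rw [hζ]; exact hζred.symm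
      have hb : bruhatLE cs (π l₁) (π ζ) :=
        (ih (ℓ (w * σ i)) hζn).1 ζ hζred (le_of_eq hζlen) l₁ hl₁
      have hu : π l₁ = u := by simpa using hω'π
      rw [← hu, hζ]
      exact hb
    · exfalso
      have hπ' : π (l₁ ++ [i]) = π l₁ * σ i := by
        rw [cs.wordProd_append, cs.wordProd_singleton]
      have hl₁π : π l₁ = u * σ i := by
        have : π l₁ * σ i = u := by rw [← hπ', hω'π]
        rw [← this, cs.simple_mul_simple_cancel_right]
      have hlen1 : ℓ u = l₁.length + 1 := by
        have : ℓ (π (l₁ ++ [i])) = (l₁ ++ [i]).length := hω'red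
        rw [hω'π] at this
        simpa using this
      have hlen2 : ℓ (u * σ i) ≤ l₁.length := by
        rw [← hl₁π]
        exact cs.length_wordProd_le l₁
      omega

lemma ble_sub {ω : List B} (hred : cs.IsReduced ω) {ω' : List B} (hsub : ω'.Sublist ω) :
    bruhatLE cs (π ω') (π ω) :=
  (pack cs ω.length).1 ω hred (le_refl _) ω' hsub

lemma ble_mul_ascent {u v : W} {i : B} (huv : bruhatLE cs u v) (hu : ℓ u < ℓ (u * σ i))
    (hv : ℓ v < ℓ (v * σ i)) : bruhatLE cs (u * σ i) (v * σ i) :=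
  (pack cs (ℓ v)).2.1 u v i huv (le_refl _) hu hv

lemma lift_iii {u w : W} {i : B} (huw : bruhatLE cs u w) (hdesc : ℓ (w * σ i) < ℓ w)
    (hasc : ℓ u < ℓ (u * σ i)) : bruhatLE cs u (w * σ i) :=
  (pack cs (ℓ w)).2.2 u w i huw (le_refl _) hdesc hasc

lemma lift_i {u w : W} {i : B} (huw : bruhatLE cs u w) (hdesc : ℓ (w * σ i) < ℓ w) :
    bruhatLE cs (u * σ i) w := by
  by_cases hasc : ℓ u < ℓ (u * σ i)
  · have h1 := lift_iii cs huw hdesc hasc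
    have h2 : bruhatLE cs (u * σ i) (w * σ i * σ i) := by
      apply ble_mul_ascent cs h1 hasc
      rw [cs.simple_mul_simple_cancel_right]
      exact hdesc
    rwa [cs.simple_mul_simple_cancel_right] at h2
  · have hd : ℓ (u * σ i) < ℓ u := by
      have := cs.length_mul_simple_ne u i
      omega
    have hdown : bruhatLE cs (u * σ i) u := by
      have := ble_step cs (cs.isReflection_simple i) (u := u * σ i) (by
        rwa [cs.simple_mul_simple_cancel_right])
      rwa [cs.simple_mul_simple_cancel_right] at this
    exact ble_trans cs hdown huw

lemma lift_ii {u w : W} {i : B} (huw : bruhatLE cs u w) (hdesc : ℓ (w * σ i) < ℓ w)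
    (hu : ℓ (u * σ i) < ℓ u) : bruhatLE cs (u * σ i) (w * σ i) := by
  apply lift_iii cs (lift_i cs huw hdesc) hdesc
  rw [cs.simple_mul_simple_cancel_right]
  exact hu

lemma len_inv_simple (w : W) (i : B) : ℓ (w⁻¹ * σ i) = ℓ (σ i * w) := by
  rw [← cs.length_inv, mul_inv_rev, cs.inv_simple, inv_inv]

lemma lift_i_left {u w : W} {i : B} (huw : bruhatLE cs u w) (hdesc : ℓ (σ i * w) < ℓ w) :
    bruhatLE cs (σ i * u) w := by
  have h1 : bruhatLE cs u⁻¹ w⁻¹ := ble_inv cs huw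
  have h2 : ℓ (w⁻¹ * σ i) < ℓ w⁻¹ := by
    rw [len_inv_simple, cs.length_inv]
    exact hdesc
  have h3 := lift_i cs h1 h2
  have h4 := ble_inv cs h3
  rwa [mul_inv_rev, cs.inv_simple, inv_inv, inv_inv] at h4

lemma lift_ii_left {u w : W} {i : B} (huw : bruhatLE cs u w) (hdesc : ℓ (σ i * w) < ℓ w)
    (hu : ℓ (σ i * u) < ℓ u) : bruhatLE cs (σ i * u) (σ i * w) := by
  have h1 : bruhatLE cs u⁻¹ w⁻¹ := ble_inv cs huw
  have h2 : ℓ (w⁻¹ * σ i) < ℓ w⁻¹ := by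
    rw [len_inv_simple, cs.length_inv]; exact hdesc
  have h2' : ℓ (u⁻¹ * σ i) < ℓ u⁻¹ := by
    rw [len_inv_simple, cs.length_inv]; exact hu
  have h3 := lift_ii cs h1 h2 h2'
  have h4 := ble_inv cs h3
  rwa [mul_inv_rev, mul_inv_rev, cs.inv_simple, inv_inv, inv_inv] at h4

lemma lift_iii_left {u w : W} {i : B} (huw : bruhatLE cs u w) (hdesc : ℓ (σ i * w) < ℓ w)
    (hu : ℓ u < ℓ (σ i * u)) : bruhatLE cs u (σ i * w) := by
  have h1 : bruhatLE cs u⁻¹ w⁻¹ := ble_inv cs huw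
  have h2 : ℓ (w⁻¹ * σ i) < ℓ w⁻¹ := by
    rw [len_inv_simple, cs.length_inv]; exact hdesc
  have h2' : ℓ u⁻¹ < ℓ (u⁻¹ * σ i) := by
    rw [len_inv_simple, cs.length_inv]; exact hu
  have h3 := lift_iii cs h1 h2 h2'
  have h4 := ble_inv cs h3
  rwa [mul_inv_rev, cs.inv_simple, inv_inv, inv_inv] at h4

lemma ble_mul_ascent_left {u v : W} {i : B} (huv : bruhatLE cs u v) (hu : ℓ u < ℓ (σ i * u))
    (hv : ℓ v < ℓ (σ i * v)) : bruhatLE cs (σ i * u) (σ i * v) := by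
  have h1 : bruhatLE cs u⁻¹ v⁻¹ := ble_inv cs huv
  have h2 : ℓ u⁻¹ < ℓ (u⁻¹ * σ i) := by
    rw [len_inv_simple, cs.length_inv]; exact hu
  have h3 : ℓ v⁻¹ < ℓ (v⁻¹ * σ i) := by
    rw [len_inv_simple, cs.length_inv]; exact hv
  have h4 := ble_mul_ascent cs h1 h2 h3
  have h5 := ble_inv cs h4
  rwa [mul_inv_rev, mul_inv_rev, cs.inv_simple, inv_inv, inv_inv] at h5

lemma ble_step_left {u : W} {t : W} (ht : cs.IsReflection t) (hl : ℓ u < ℓ (t * u)) :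
    bruhatLE cs u (t * u) := by
  have h1 : ℓ u⁻¹ < ℓ (u⁻¹ * t) := by
    have e : ℓ (u⁻¹ * t) = ℓ (t * u) := by
      rw [← cs.length_inv (u⁻¹ * t), mul_inv_rev, ht.inv, inv_inv]
    rw [cs.length_inv, e]
    exact hl
  have h2 := ble_step cs ht h1
  have h3 := ble_inv cs h2
  simpa [mul_inv_rev, ht.inv] using h3

/-- Key dihedral-type exchange lemma. -/
lemma lemmaD {v : W} {i j : B} (h1 : ℓ v < ℓ (v * σ i))
    (h2 : ℓ (σ j * (v * σ i)) < ℓ (v * σ i)) (h3 : ℓ v < ℓ (σ j * v)) :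
    σ j * v * σ i = v := by
  obtain ⟨ω, hωl, hωπ⟩ := cs.exists_reduced_word v⁻¹
  have hπ : π (i :: ω) = σ i * v⁻¹ := by rw [cs.wordProd_cons, ← hωπ]
  have hvs : ℓ (v * σ i) = ℓ v + 1 := by
    rcases cs.length_mul_simple v i with h | h <;> omega
  have hred : cs.IsReduced (i :: ω) := by
    show ℓ (π (i :: ω)) = _
    rw [hπ]
    have : ℓ (σ i * v⁻¹) = ℓ (v * σ i) := by
      rw [← cs.length_inv (σ i * v⁻¹), mul_inv_rev, cs.inv_simple, inv_inv]
    rw [this, hvs, List.length_cons, ← hωl.eq, ← hωπ, cs.length_inv]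
  have hexlen : ℓ (π (i :: ω) * σ j) < ℓ (π (i :: ω)) := by
    rw [hπ]
    have e1 : ℓ (σ i * v⁻¹ * σ j) = ℓ (σ j * (v * σ i)) := by
      rw [← cs.length_inv (σ i * v⁻¹ * σ j), mul_inv_rev, mul_inv_rev, cs.inv_simple,
        cs.inv_simple, inv_inv]
    have e2 : ℓ (σ i * v⁻¹) = ℓ (v * σ i) := by
      rw [← cs.length_inv (σ i * v⁻¹), mul_inv_rev, cs.inv_simple, inv_inv]
    rw [e1, e2]
    exact h2
  obtain ⟨k, hk, heq⟩ := strong_exchange cs hred (cs.isReflection_simple j) hexlen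
  rcases k with _ | k'
  · -- erased the first letter
    have : σ i * v⁻¹ * σ j = v⁻¹ := by
      rw [← hπ, heq]
      simp [hωπ]
    have h5 := congrArg (fun z => z⁻¹) this
    simpa [mul_inv_rev, cs.inv_simple, mul_assoc] using h5
  · exfalso
    have herase : (i :: ω).eraseIdx (k' + 1) = i :: ω.eraseIdx k' := rfl
    rw [hπ, herase, cs.wordProd_cons] at heq
    have h6 : v⁻¹ * σ j = π (ω.eraseIdx k') := by
      have := congrArg (fun z => σ i * z) heq
      simpa [mul_assoc, cs.simple_mul_simple_cancel_left] using this
    have h7 : ℓ (v⁻¹ * σ j) ≤ (ω.eraseIdx k').length := by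
      rw [h6]; exact cs.length_wordProd_le _
    have h8 : k' < ω.length := by simpa using hk
    have h9 := List.length_eraseIdx_add_one h8
    have h10 : ℓ (v⁻¹ * σ j) = ℓ (σ j * v) := len_inv_simple cs v j
    have h11 : ω.length = ℓ v := by rw [← hωl.eq, ← hωπ, cs.length_inv]
    omega

section Theta

variable (θ : W ≃* W)

lemma theta_wordProd (hS : PreservesSimples cs θ) (ω : List B) :
    ∃ ω' : List B, ω'.length = ω.length ∧ θ (π ω) = π ω' := by
  induction ω with
  | nil => exact ⟨[], rfl, by simp⟩
  | cons i ω ih =>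
    obtain ⟨ω', hlen, hπ⟩ := ih
    obtain ⟨j, hj⟩ := hS i
    refine ⟨j :: ω', by simp [hlen], ?_⟩
    rw [cs.wordProd_cons, cs.wordProd_cons, map_mul, hj, hπ]

lemma theta_length (hinv : ∀ w : W, θ (θ w) = w) (hS : PreservesSimples cs θ) (w : W) :
    ℓ (θ w) = ℓ w := by
  have key : ∀ v : W, ℓ (θ v) ≤ ℓ v := by
    intro v
    obtain ⟨ω, hωl, hωπ⟩ := cs.exists_reduced_word v
    obtain ⟨ω', hlen, hπ⟩ := theta_wordProd cs θ hS ω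
    calc ℓ (θ v) = ℓ (π ω') := by rw [hωπ, hπ]
      _ ≤ ω'.length := cs.length_wordProd_le ω'
      _ = ω.length := hlen
      _ = ℓ v := by rw [← hωl.eq, ← hωπ]
  have h1 := key w
  have h2 := key (θ w)
  rw [hinv w] at h2
  omega

lemma theta_reflection (hS : PreservesSimples cs θ) {t : W} (ht : cs.IsReflection t) :
    cs.IsReflection (θ t) := by
  obtain ⟨w, i, rfl⟩ := ht
  obtain ⟨j, hj⟩ := hS i
  refine ⟨θ w, j, ?_⟩
  rw [map_mul, map_mul, hj, map_inv]

lemma theta_ble (hinv : ∀ w : W, θ (θ w) = w) (hS : PreservesSimples cs θ) {u v : W}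
    (h : bruhatLE cs u v) : bruhatLE cs (θ u) (θ v) := by
  rw [ble_iff_rtg] at *
  induction h with
  | refl => exact Relation.ReflTransGen.refl
  | @tail b c h1 h2 ih =>
    obtain ⟨t, ht, rfl, hlt⟩ := h2
    refine ih.tail ⟨θ t, theta_reflection cs θ hS ht, by rw [map_mul], ?_⟩
    rw [theta_length cs θ hinv hS, theta_length cs θ hinv hS]
    exact hlt

lemma len_t_mul (hinv : ∀ w : W, θ (θ w) = w) (hS : PreservesSimples cs θ)
    {x : W} (hx : θ x = x⁻¹) (i : B) : ℓ (θ (cs.simple i) * x) = ℓ (x * σ i) := by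
  obtain ⟨j, hj⟩ := hS i
  have h1 : θ (x * σ i) = x⁻¹ * σ j := by rw [map_mul, hx, hj]
  have h2 : ℓ (x * σ i) = ℓ (x⁻¹ * σ j) := by
    rw [← h1, theta_length cs θ hinv hS]
  rw [hj, h2, ← cs.length_inv (x⁻¹ * σ j), mul_inv_rev, cs.inv_simple, inv_inv]

lemma tw_theta (hinv : ∀ w : W, θ (θ w) = w) (hS : PreservesSimples cs θ)
    {x : W} (hx : θ x = x⁻¹) (i : B) :
    θ (twMul cs θ x i) = (twMul cs θ x i)⁻¹ := by
  obtain ⟨j, hj⟩ := hS i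
  unfold twMul
  by_cases h : θ (cs.simple i) * x * cs.simple i = x
  · rw [if_pos h, map_mul, hx]
    rw [hj] at h ⊢
    have h2 : σ j * x = x * σ i := by
      have := congrArg (fun z => z * σ i) h
      simpa [mul_assoc, cs.simple_mul_simple_cancel_right] using this
    rw [mul_inv_rev, cs.inv_simple]
    have h3 := congrArg (fun z => x⁻¹ * z * x⁻¹) h2
    simpa [mul_assoc] using h3
  · rw [if_neg h, map_mul, map_mul, hx, hinv]
    rw [hj, mul_inv_rev, mul_inv_rev, cs.inv_simple, cs.inv_simple, mul_assoc]

lemma tw_invol (hS : PreservesSimples cs θ) (x : W) (i : B) :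
    twMul cs θ (twMul cs θ x i) i = x := by
  obtain ⟨j, hj⟩ := hS i
  have hjj : θ (cs.simple i) * θ (cs.simple i) = 1 := by
    rw [hj, cs.simple_mul_simple_self]
  unfold twMul
  by_cases h : θ (cs.simple i) * x * cs.simple i = x
  · rw [if_pos h]
    have hcond : θ (cs.simple i) * (x * σ i) * σ i = x * σ i := by
      rw [← mul_assoc, h]
    rw [if_pos hcond, cs.simple_mul_simple_cancel_right]
  · rw [if_neg h]
    have hcond : θ (cs.simple i) * (θ (cs.simple i) * x * σ i) * σ i = x := by
      calc θ (cs.simple i) * (θ (cs.simple i) * x * σ i) * σ i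
          = (θ (cs.simple i) * θ (cs.simple i)) * x * (σ i * σ i) := by simp [mul_assoc]
        _ = x := by rw [hjj, cs.simple_mul_simple_self, one_mul, mul_one]
    have hcond' : ¬ (θ (cs.simple i) * (θ (cs.simple i) * x * σ i) * σ i
        = θ (cs.simple i) * x * σ i) := by
      rw [hcond]
      intro hh
      exact h hh.symm
    rw [if_neg hcond', hcond]

lemma tw_len_ne (hinv : ∀ w : W, θ (θ w) = w) (hS : PreservesSimples cs θ)
    {x : W} (hx : θ x = x⁻¹) {i : B} (hne : θ (cs.simple i) * x * cs.simple i ≠ x) :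
    ℓ (θ (cs.simple i) * x * cs.simple i) ≠ ℓ x := by
  obtain ⟨j, hj⟩ := hS i
  have htx : ℓ (σ j * x) = ℓ (x * σ i) := by
    rw [← hj]
    exact len_t_mul cs θ hinv hS hx i
  rw [hj] at hne ⊢
  intro heq
  rcases Nat.lt_or_ge (ℓ x) (ℓ (x * σ i)) with hasc | hdesc'
  · apply hne
    apply lemmaD cs hasc ?h2 ?h3
    case h2 =>
      rw [← mul_assoc, heq]
      exact hasc
    case h3 =>
      rw [htx]
      exact hasc
  · have hd : ℓ (x * σ i) < ℓ x := by
      have := cs.length_mul_simple_ne x i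
      omega
    have hD := lemmaD cs (v := σ j * x) (i := i) (j := j) ?h1 ?h2 ?h3
    case h1 =>
      rw [heq, htx]
      exact hd
    case h2 =>
      rw [show σ j * (σ j * x * σ i) = x * σ i from by
        rw [← mul_assoc, cs.simple_mul_simple_cancel_left], heq]
      exact hd
    case h3 =>
      rw [cs.simple_mul_simple_cancel_left, htx]
      exact hd
    rw [cs.simple_mul_simple_cancel_left] at hD
    apply hne
    rw [← hD, cs.simple_mul_simple_cancel_right]

lemma tw_cases (hinv : ∀ w : W, θ (θ w) = w) (hS : PreservesSimples cs θ)
    {x : W} (hx : θ x = x⁻¹) (i : B) :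
    (twMul cs θ x i = x * cs.simple i ∧ θ (cs.simple i) * x = x * cs.simple i) ∨
    (twMul cs θ x i = θ (cs.simple i) * x * cs.simple i ∧
      θ (cs.simple i) * x * cs.simple i ≠ x ∧
      (ℓ x < ℓ (x * cs.simple i) → ℓ (twMul cs θ x i) = ℓ (x * cs.simple i) + 1) ∧
      (ℓ (x * cs.simple i) < ℓ x → ℓ (twMul cs θ x i) + 1 = ℓ (x * cs.simple i))) := by
  unfold twMul
  by_cases h : θ (cs.simple i) * x * cs.simple i = x
  · left
    refine ⟨if_pos h, ?_⟩
    have := congrArg (fun z => z * σ i) h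
    simpa [mul_assoc, cs.simple_mul_simple_cancel_right] using this
  · right
    rw [if_neg h]
    refine ⟨rfl, h, ?_, ?_⟩
    · intro hasc
      have hne := tw_len_ne cs θ hinv hS hx h
      have htx : ℓ (θ (cs.simple i) * x) = ℓ (x * σ i) := len_t_mul cs θ hinv hS hx i
      have h1 : ℓ (x * σ i) = ℓ x + 1 := by
        rcases cs.length_mul_simple x i with hh | hh <;> omega
      have h2 := cs.length_mul_simple (θ (cs.simple i) * x) i
      omega
    · intro hdesc
      have hne := tw_len_ne cs θ hinv hS hx h
      have htx : ℓ (θ (cs.simple i) * x) = ℓ (x * σ i) := len_t_mul cs θ hinv hS hx i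
      have h1 : ℓ x = ℓ (x * σ i) + 1 := by
        rcases cs.length_mul_simple x i with hh | hh <;> omega
      have h2 := cs.length_mul_simple (θ (cs.simple i) * x) i
      omega

lemma tw_len_ne' (hinv : ∀ w : W, θ (θ w) = w) (hS : PreservesSimples cs θ)
    {x : W} (hx : θ x = x⁻¹) (i : B) : ℓ (twMul cs θ x i) ≠ ℓ x := by
  rcases tw_cases cs θ hinv hS hx i with ⟨he, _⟩ | ⟨he, hne, _, _⟩
  · rw [he]
    exact cs.length_mul_simple_ne x i
  · rw [he]
    exact tw_len_ne cs θ hinv hS hx hne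

lemma tw_asc_s (hinv : ∀ w : W, θ (θ w) = w) (hS : PreservesSimples cs θ)
    {x : W} (hx : θ x = x⁻¹) {i : B} (h : ℓ x < ℓ (twMul cs θ x i)) :
    ℓ x < ℓ (x * cs.simple i) := by
  rcases Nat.lt_or_ge (ℓ x) (ℓ (x * σ i)) with hasc | hge
  · exact hasc
  have hd : ℓ (x * σ i) < ℓ x := by
    have := cs.length_mul_simple_ne x i
    omega
  exfalso
  rcases tw_cases cs θ hinv hS hx i with ⟨he, _⟩ | ⟨he, hne, _, hl2⟩
  · rw [he] at h
    omega
  · have := hl2 hd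
    omega

lemma tw_desc_s (hinv : ∀ w : W, θ (θ w) = w) (hS : PreservesSimples cs θ)
    {x : W} (hx : θ x = x⁻¹) {i : B} (h : ℓ (twMul cs θ x i) < ℓ x) :
    ℓ (x * cs.simple i) < ℓ x := by
  rcases Nat.lt_or_ge (ℓ (x * σ i)) (ℓ x) with hdesc | hge
  · exact hdesc
  have ha : ℓ x < ℓ (x * σ i) := by
    have := cs.length_mul_simple_ne x i
    omega
  exfalso
  rcases tw_cases cs θ hinv hS hx i with ⟨he, _⟩ | ⟨he, hne, hl1, _⟩
  · rw [he] at h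
    omega
  · have := hl1 ha
    omega

lemma ble_tw_of_asc (hinv : ∀ w : W, θ (θ w) = w) (hS : PreservesSimples cs θ)
    {x : W} (hx : θ x = x⁻¹) {i : B} (h : ℓ x < ℓ (twMul cs θ x i)) :
    bruhatLE cs x (twMul cs θ x i) := by
  obtain ⟨j, hj⟩ := hS i
  have hasc := tw_asc_s cs θ hinv hS hx h
  rcases tw_cases cs θ hinv hS hx i with ⟨he, _⟩ | ⟨he, hne, hl1, _⟩
  · rw [he]
    exact ble_step cs (cs.isReflection_simple i) hasc
  · rw [he, hj]
    have h1 : bruhatLE cs x (x * σ i) := ble_step cs (cs.isReflection_simple i) hasc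
    have hlen := hl1 hasc
    rw [he, hj] at hlen
    have h2 : bruhatLE cs (x * σ i) (σ j * (x * σ i)) := by
      apply ble_step_left cs (cs.isReflection_simple j)
      rw [← mul_assoc]
      omega
    rw [← mul_assoc] at h2
    exact ble_trans cs h1 h2

lemma ble_tw_of_desc (hinv : ∀ w : W, θ (θ w) = w) (hS : PreservesSimples cs θ)
    {x : W} (hx : θ x = x⁻¹) {i : B} (h : ℓ (twMul cs θ x i) < ℓ x) :
    bruhatLE cs (twMul cs θ x i) x := by
  have hmem := tw_theta cs θ hinv hS hx i
  have h2 := ble_tw_of_asc cs θ hinv hS hmem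
    (i := i) (by rw [tw_invol cs θ hS]; exact h)
  rwa [tw_invol cs θ hS] at h2

section TL

variable (hinv : ∀ w : W, θ (θ w) = w) (hS : PreservesSimples cs θ)
variable {u v : W} {i : B}

include hinv hS

/-- Twisted lifting (a): if `v·s < v` and `u ≤ v` then `u·s ≤ v`. -/
lemma TLa (hu : θ u = u⁻¹) (hv : θ v = v⁻¹) (huv : bruhatLE cs u v)
    (hdv : ℓ (v * cs.simple i) < ℓ v) : bruhatLE cs (twMul cs θ u i) v := by
  obtain ⟨j, hj⟩ := hS i
  have htv : ℓ (σ j * v) < ℓ v := by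
    have := len_t_mul cs θ hinv hS hv i
    rw [hj] at this
    omega
  have h1 : bruhatLE cs (u * σ i) v := lift_i cs huv hdv
  rcases tw_cases cs θ hinv hS hu i with ⟨he, _⟩ | ⟨he, _, _, _⟩
  · rw [he]
    exact h1
  · rw [he, hj]
    have h2 := lift_i_left cs h1 htv
    rwa [← mul_assoc] at h2

/-- Twisted lifting (c): if moreover `u·s > u` then `u ≤ v·s`. -/
lemma TLc (hu : θ u = u⁻¹) (hv : θ v = v⁻¹) (huv : bruhatLE cs u v)
    (hdv : ℓ (v * cs.simple i) < ℓ v) (hasc : ℓ u < ℓ (u * cs.simple i)) :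
    bruhatLE cs u (twMul cs θ v i) := by
  obtain ⟨j, hj⟩ := hS i
  have h1 : bruhatLE cs u (v * σ i) := lift_iii cs huv hdv hasc
  rcases tw_cases cs θ hinv hS hv i with ⟨he, _⟩ | ⟨he, hne, _, hl2⟩
  · rw [he]
    exact h1
  · rw [he, hj]
    have hlenM := hl2 hdv
    rw [he, hj] at hlenM
    have hlen : ℓ (σ j * (v * σ i)) < ℓ (v * σ i) := by
      rw [← mul_assoc]
      omega
    have htu : ℓ u < ℓ (σ j * u) := by
      have := len_t_mul cs θ hinv hS hu i
      rw [hj] at this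
      omega
    have h2 := lift_iii_left cs h1 hlen htu
    rwa [← mul_assoc] at h2

/-- Twisted lifting (b): if `u·s < u` and `v·s < v` and `u ≤ v` then `u·s ≤ v·s`. -/
lemma TLb (hu : θ u = u⁻¹) (hv : θ v = v⁻¹) (huv : bruhatLE cs u v)
    (hdv : ℓ (v * cs.simple i) < ℓ v) (hdu : ℓ (u * cs.simple i) < ℓ u) :
    bruhatLE cs (twMul cs θ u i) (twMul cs θ v i) := by
  obtain ⟨j, hj⟩ := hS i
  have h1 : bruhatLE cs (u * σ i) (v * σ i) := lift_ii cs huv hdv hdu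
  rcases tw_cases cs θ hinv hS hu i with ⟨heu, hcu⟩ | ⟨heu, hneu, _, hlu⟩ <;>
    rcases tw_cases cs θ hinv hS hv i with ⟨hev, hcv⟩ | ⟨hev, hnev, _, hlv⟩
  · rw [heu, hev]
    exact h1
  · -- u plain, v twisted
    rw [heu, hev, hj]
    rw [hj] at hcu
    -- σ j is an ascent of u * σ i since σ j * (u * σ i) = u
    have hkey : σ j * (u * σ i) = u := by
      rw [← hcu, cs.simple_mul_simple_cancel_left]
    have hascu : ℓ (u * σ i) < ℓ (σ j * (u * σ i)) := by
      rw [hkey]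
      exact hdu
    have hlenM := hlv hdv
    rw [hev, hj] at hlenM
    have hdesc : ℓ (σ j * (v * σ i)) < ℓ (v * σ i) := by
      rw [← mul_assoc]
      omega
    have h2 := lift_iii_left cs h1 hdesc hascu
    rwa [← mul_assoc] at h2
  · -- u twisted, v plain
    rw [heu, hev, hj]
    have hlenM := hlu hdu
    rw [heu, hj] at hlenM
    have hstep : bruhatLE cs (σ j * u * σ i) (u * σ i) := by
      have hkey : σ j * (σ j * u * σ i) = u * σ i := by
        rw [← mul_assoc, cs.simple_mul_simple_cancel_left]
      have := ble_step_left cs (cs.isReflection_simple j)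
        (u := σ j * u * σ i) (by rw [hkey]; omega)
      rwa [hkey] at this
    exact ble_trans cs hstep h1
  · -- both twisted
    rw [heu, hev, hj]
    have hlenMu := hlu hdu
    rw [heu, hj] at hlenMu
    have hlenMv := hlv hdv
    rw [hev, hj] at hlenMv
    have hdescu : ℓ (σ j * (u * σ i)) < ℓ (u * σ i) := by
      rw [← mul_assoc]
      omega
    have hdescv : ℓ (σ j * (v * σ i)) < ℓ (v * σ i) := by
      rw [← mul_assoc]
      omega
    have h2 := lift_ii_left cs h1 hdescv hdescu
    rwa [← mul_assoc, ← mul_assoc] at h2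

/-- Dual twisted lifting: both twisted ascents. -/
lemma TLb' (hu : θ u = u⁻¹) (hv : θ v = v⁻¹) (huv : bruhatLE cs u v)
    (hau : ℓ u < ℓ (u * cs.simple i)) (hav : ℓ v < ℓ (v * cs.simple i)) :
    bruhatLE cs (twMul cs θ u i) (twMul cs θ v i) := by
  obtain ⟨j, hj⟩ := hS i
  have h1 : bruhatLE cs (u * σ i) (v * σ i) := ble_mul_ascent cs huv hau hav
  rcases tw_cases cs θ hinv hS hu i with ⟨heu, hcu⟩ | ⟨heu, hneu, hlu, _⟩ <;>
    rcases tw_cases cs θ hinv hS hv i with ⟨hev, hcv⟩ | ⟨hev, hnev, hlv, _⟩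
  · rw [heu, hev]
    exact h1
  · -- u plain, v twisted: u σ i ≤ v σ i ≤ σ j (v σ i)
    rw [heu, hev, hj]
    have hlenM := hlv hav
    rw [hev, hj] at hlenM
    have h2 : bruhatLE cs (v * σ i) (σ j * (v * σ i)) := by
      apply ble_step_left cs (cs.isReflection_simple j)
      rw [← mul_assoc]
      omega
    rw [← mul_assoc] at h2
    exact ble_trans cs h1 h2
  · -- u twisted, v plain
    rw [heu, hev, hj]
    rw [hj] at hcv
    have hlenM := hlu hau
    rw [heu, hj] at hlenM
    have hascu : ℓ (u * σ i) < ℓ (σ j * (u * σ i)) := by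
      rw [← mul_assoc]
      omega
    have hkeyv : σ j * (v * σ i) = v := by
      rw [← hcv, cs.simple_mul_simple_cancel_left]
    have hdescv : ℓ (σ j * (v * σ i)) < ℓ (v * σ i) := by
      rw [hkeyv]
      exact hav
    have h2 := lift_i_left cs h1 hdescv
    rwa [← mul_assoc] at h2
  · -- both twisted
    rw [heu, hev, hj]
    have hlenMu := hlu hau
    rw [heu, hj] at hlenMu
    have hlenMv := hlv hav
    rw [hev, hj] at hlenMv
    have hascu : ℓ (u * σ i) < ℓ (σ j * (u * σ i)) := by
      rw [← mul_assoc]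
      omega
    have hascv : ℓ (v * σ i) < ℓ (σ j * (v * σ i)) := by
      rw [← mul_assoc]
      omega
    have h2 := ble_mul_ascent_left cs h1 hascu hascv
    rwa [← mul_assoc, ← mul_assoc] at h2

lemma mem_interval_tw {w x : W} (hw : θ w = w⁻¹) (hd : ℓ (w * cs.simple i) < ℓ w)
    (hx : x ∈ bruhatIntervalTI cs θ w) : twMul cs θ x i ∈ bruhatIntervalTI cs θ w :=
  ⟨tw_theta cs θ hinv hS hx.1 i, TLa cs θ hinv hS hx.1 hw hx.2 hd⟩

lemma cover_up {w x : W} (hw : θ w = w⁻¹) (hd : ℓ (w * cs.simple i) < ℓ w)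
    (hx : x ∈ bruhatIntervalTI cs θ w) (hlt : ℓ x < ℓ (twMul cs θ x i)) :
    tiCovers cs θ w x (twMul cs θ x i) := by
  obtain ⟨hxth, hxle⟩ := hx
  have hMmem : twMul cs θ x i ∈ bruhatIntervalTI cs θ w :=
    mem_interval_tw cs θ hinv hS hw hd ⟨hxth, hxle⟩
  have hMth : θ (twMul cs θ x i) = (twMul cs θ x i)⁻¹ := tw_theta cs θ hinv hS hxth i
  refine ⟨⟨hxth, hxle⟩, hMmem, ble_tw_of_asc cs θ hinv hS hxth hlt, ?_, ?_⟩
  · intro heq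
    rw [← heq] at hlt
    exact lt_irrefl _ hlt
  · intro z hz hxz hzM
    rcases le_or_gt (ℓ z) (ℓ x) with hz1 | hz1
    · exact Or.inl (ble_eq_of_length_ge cs hxz hz1).symm
    rcases le_or_gt (ℓ (twMul cs θ x i)) (ℓ z) with hz2 | hz2
    · exact Or.inr (ble_eq_of_length_ge cs hzM hz2)
    exfalso
    -- middle case
    have hasc_s : ℓ x < ℓ (x * cs.simple i) := tw_asc_s cs θ hinv hS hxth hlt
    have hxs1 : ℓ (x * cs.simple i) = ℓ x + 1 := by
      rcases cs.length_mul_simple x i with hh | hh <;> omega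
    rcases tw_cases cs θ hinv hS hxth i with ⟨he, _⟩ | ⟨he, hne, hl1, _⟩
    · rw [he] at hz2
      omega
    · have hM2 : ℓ (twMul cs θ x i) = ℓ x + 2 := by
        have := hl1 hasc_s
        omega
      have hdM : ℓ (twMul cs θ x i * cs.simple i) < ℓ (twMul cs θ x i) :=
        tw_desc_s cs θ hinv hS hMth (i := i)
          (by rw [tw_invol cs θ hS]; omega)
      rcases Nat.lt_or_ge (ℓ (z * cs.simple i)) (ℓ z) with hzd | hzge
      · -- z has a twisted descent
        have h5 := TLb cs θ hinv hS hz.1 hMth hzM hdM hzd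
        rw [tw_invol cs θ hS] at h5
        have h6 := TLc cs θ hinv hS hxth hz.1 hxz hzd hasc_s
        have h7 : twMul cs θ z i = x := ble_antisymm cs h5 h6
        have h8 : z = twMul cs θ x i := by
          rw [← h7, tw_invol cs θ hS]
        rw [h8] at hz2
        omega
      · have hza : ℓ z < ℓ (z * cs.simple i) := by
          have := cs.length_mul_simple_ne z i
          omega
        have h5 := TLc cs θ hinv hS hz.1 hMth hzM hdM hza
        rw [tw_invol cs θ hS] at h5
        have := ble_length cs h5
        omega

lemma tiCovers_of_mem {w x : W} (hw : θ w = w⁻¹) (hd : ℓ (w * cs.simple i) < ℓ w)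
    (hx : x ∈ bruhatIntervalTI cs θ w) :
    tiCovers cs θ w x (twMul cs θ x i) ∨ tiCovers cs θ w (twMul cs θ x i) x := by
  have hne := tw_len_ne' cs θ hinv hS hx.1 i
  rcases Nat.lt_or_ge (ℓ x) (ℓ (twMul cs θ x i)) with hlt | hge
  · exact Or.inl (cover_up cs θ hinv hS hw hd hx hlt)
  · right
    have hlt' : ℓ (twMul cs θ x i) < ℓ x := by omega
    have hMmem := mem_interval_tw cs θ hinv hS hw hd hx
    have h2 := cover_up cs θ hinv hS hw hd hMmem
      (by rw [tw_invol cs θ hS]; exact hlt')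
    rwa [tw_invol cs θ hS] at h2

lemma special_matching {w x y : W} (hw : θ w = w⁻¹) (hd : ℓ (w * cs.simple i) < ℓ w)
    (hcov : tiCovers cs θ w x y) (hne : twMul cs θ x i ≠ y) :
    bruhatLE cs (twMul cs θ x i) (twMul cs θ y i) ∧ twMul cs θ x i ≠ twMul cs θ y i := by
  obtain ⟨hxm, hym, hxy, hxyne, hmin⟩ := hcov
  have hlxy : ℓ x < ℓ y := by
    rcases Nat.lt_or_ge (ℓ x) (ℓ y) with h | h
    · exact h
    · exact absurd (ble_eq_of_length_ge cs hxy h) hxyne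
  have hneM : twMul cs θ x i ≠ twMul cs θ y i := by
    intro h
    apply hxyne
    have := congrArg (fun z => twMul cs θ z i) h
    simpa [tw_invol cs θ hS] using this
  refine ⟨?_, hneM⟩
  have hynel := tw_len_ne' cs θ hinv hS hym.1 i
  have hxnel := tw_len_ne' cs θ hinv hS hxm.1 i
  rcases Nat.lt_or_ge (ℓ (twMul cs θ y i)) (ℓ y) with hA | hB
  · -- y has a twisted descent
    have hdy_s : ℓ (y * cs.simple i) < ℓ y := tw_desc_s cs θ hinv hS hym.1 hA
    rcases Nat.lt_or_ge (ℓ (x * cs.simple i)) (ℓ x) with hdx | hax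
    · exact TLb cs θ hinv hS hxm.1 hym.1 hxy hdy_s hdx
    · exfalso
      have hax' : ℓ x < ℓ (x * cs.simple i) := by
        have := cs.length_mul_simple_ne x i
        omega
      have h1 := TLc cs θ hinv hS hxm.1 hym.1 hxy hdy_s hax'
      have hMy_y : bruhatLE cs (twMul cs θ y i) y := ble_tw_of_desc cs θ hinv hS hym.1 hA
      have hMy_mem : twMul cs θ y i ∈ bruhatIntervalTI cs θ w :=
        ⟨tw_theta cs θ hinv hS hym.1 i, ble_trans cs hMy_y hym.2⟩
      rcases hmin (twMul cs θ y i) hMy_mem h1 hMy_y with h | h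
      · apply hne
        rw [← h, tw_invol cs θ hS]
      · rw [h] at hA
        omega
  · have hB' : ℓ y < ℓ (twMul cs θ y i) := by omega
    rcases Nat.lt_or_ge (ℓ (twMul cs θ x i)) (ℓ x) with hdx | hax
    · have h1 : bruhatLE cs (twMul cs θ x i) x := ble_tw_of_desc cs θ hinv hS hxm.1 hdx
      have h2 : bruhatLE cs y (twMul cs θ y i) := ble_tw_of_asc cs θ hinv hS hym.1 hB'
      exact ble_trans cs h1 (ble_trans cs hxy h2)
    · have hax' : ℓ x < ℓ (twMul cs θ x i) := by omega
      exact TLb' cs θ hinv hS hxm.1 hym.1 hxy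
        (tw_asc_s cs θ hinv hS hxm.1 hax') (tw_asc_s cs θ hinv hS hym.1 hB')

end TL

end Theta

end SMaux

/-- Theorem 4.4: if `s` is a right descent of the twisted involution `w`, then
`v ↦ v · s̲` is a special matching on the interval `[e, w] ⊆ Br(I(θ))`. -/
theorem stmt_10 {B W : Type*} [Group W] {M : CoxeterMatrix B}
    (cs : CoxeterSystem M W) (θ : W ≃* W)
    (hinv : ∀ w : W, θ (θ w) = w) (hS : PreservesSimples cs θ)
    (w : W) (hw : θ w = w⁻¹) (i : B) (hd : cs.IsRightDescent w i) :
    (∀ x ∈ bruhatIntervalTI cs θ w, twMul cs θ x i ∈ bruhatIntervalTI cs θ w) ∧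
    (∀ x ∈ bruhatIntervalTI cs θ w, twMul cs θ (twMul cs θ x i) i = x) ∧
    (∀ x ∈ bruhatIntervalTI cs θ w,
      tiCovers cs θ w x (twMul cs θ x i) ∨ tiCovers cs θ w (twMul cs θ x i) x) ∧
    (∀ x y, tiCovers cs θ w x y → twMul cs θ x i ≠ y →
      bruhatLE cs (twMul cs θ x i) (twMul cs θ y i) ∧ twMul cs θ x i ≠ twMul cs θ y i) := by
  refine ⟨?_, ?_, ?_, ?_⟩
  · intro x hx
    exact SMaux.mem_interval_tw cs θ hinv hS hw hd hx
  · intro x _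
    exact SMaux.tw_invol cs θ hS x i
  · intro x hx
    exact SMaux.tiCovers_of_mem cs θ hinv hS hw hd hx
  · intro x y hcov hneq
    exact SMaux.special_matching cs θ hinv hS hw hd hcov hneq
end

section
/- For W × W with the swap automorphism θ, the Bruhat order on I(θ) = {(w,w⁻¹) : w ∈ W} is isomorphic, via w ↦ (w,w⁻¹), to the Bruhat order on W. -/
set_option linter.unusedSectionVars false

section Aux

variable {B W : Type*} [Group W] {M : CoxeterMatrix B} (cs : CoxeterSystem M W)

lemma bruhat_refl (w : W) : bruhatLE cs w w :=
  ⟨[], by simp, by simp, by simp⟩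

lemma bruhat_cons {t u v : W} (ht : cs.IsReflection t)
    (hlen : cs.length u < cs.length (u * t)) (h : bruhatLE cs (u * t) v) :
    bruhatLE cs u v := by
  obtain ⟨L, h1, h2, h3⟩ := h
  refine ⟨t :: L, ?_, by simpa using h2, ?_⟩
  · intro x hx
    rcases List.mem_cons.mp hx with rfl | hx
    · exact ht
    · exact h1 x hx
  · intro k hk
    match k with
    | 0 => simpa using hlen
    | j + 1 =>
      simpa [List.take_succ_cons] using h3 j (by simpa using hk)

variable {M2 : CoxeterMatrix (B ⊕ B)} (cs2 : CoxeterSystem M2 (W × W))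
variable (hl : ∀ i : B, cs2.simple (Sum.inl i) = (cs.simple i, 1))
variable (hr : ∀ i : B, cs2.simple (Sum.inr i) = (1, cs.simple i))

include hl hr

lemma wordProd_pair (l : List (B ⊕ B)) :
    cs2.wordProd l =
      (cs.wordProd (l.filterMap Sum.getLeft?), cs.wordProd (l.filterMap Sum.getRight?)) := by
  induction l with
  | nil => simp; rfl
  | cons x l ih =>
    cases x with
    | inl i =>
      simp only [CoxeterSystem.wordProd_cons, List.filterMap_cons, Sum.getLeft?,
        Sum.getRight?, ih, hl i]
      ext <;> simp [CoxeterSystem.wordProd_cons]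
    | inr i =>
      simp only [CoxeterSystem.wordProd_cons, List.filterMap_cons, Sum.getLeft?,
        Sum.getRight?, ih, hr i]
      ext <;> simp [CoxeterSystem.wordProd_cons]

lemma filterMap_len (l : List (B ⊕ B)) :
    (l.filterMap Sum.getLeft?).length + (l.filterMap Sum.getRight?).length = l.length := by
  induction l with
  | nil => simp
  | cons x l ih =>
    cases x <;> simp [List.filterMap_cons, Sum.getLeft?, Sum.getRight?] <;> omega

lemma len2 (a b : W) : cs2.length (a, b) = cs.length a + cs.length b := by
  apply le_antisymm
  · obtain ⟨ω₁, hω₁, rfl⟩ := cs.exists_reduced_word a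
    obtain ⟨ω₂, hω₂, rfl⟩ := cs.exists_reduced_word b
    have h : cs2.wordProd (ω₁.map Sum.inl ++ ω₂.map Sum.inr)
        = (cs.wordProd ω₁, cs.wordProd ω₂) := by
      rw [wordProd_pair cs cs2 hl hr]
      congr 1 <;> · congr 1; simp [List.filterMap_append, List.filterMap_map,
        Function.comp_def, Sum.getLeft?, Sum.getRight?, List.filterMap_eq_map,
        List.filterMap_eq_nil_iff]
    calc cs2.length (cs.wordProd ω₁, cs.wordProd ω₂)
        ≤ (ω₁.map Sum.inl ++ ω₂.map Sum.inr).length := h ▸ cs2.length_wordProd_le _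
      _ = cs.length (cs.wordProd ω₁) + cs.length (cs.wordProd ω₂) := by
          simp [hω₁.eq, hω₂.eq]
  · obtain ⟨l, hlen, hprod⟩ := cs2.exists_reduced_word (a, b)
    have hlen' : cs2.length (a, b) = l.length := by rw [hprod]; exact hlen.eq
    rw [wordProd_pair cs cs2 hl hr] at hprod
    have ha : a = cs.wordProd (l.filterMap Sum.getLeft?) := congrArg Prod.fst hprod
    have hb : b = cs.wordProd (l.filterMap Sum.getRight?) := congrArg Prod.snd hprod
    have h1 : cs.length a ≤ (l.filterMap Sum.getLeft?).length :=
      ha ▸ cs.length_wordProd_le (l.filterMap Sum.getLeft?)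
    have h2 : cs.length b ≤ (l.filterMap Sum.getRight?).length :=
      hb ▸ cs.length_wordProd_le (l.filterMap Sum.getRight?)
    have h3 := filterMap_len cs cs2 hl hr l
    omega

lemma refl_left {r : W} (h : cs.IsReflection r) : cs2.IsReflection ((r, 1) : W × W) := by
  obtain ⟨w, i, rfl⟩ := h
  exact ⟨(w, 1), Sum.inl i, by rw [hl i]; ext <;> simp⟩

lemma refl_right {r : W} (h : cs.IsReflection r) : cs2.IsReflection ((1, r) : W × W) := by
  obtain ⟨w, i, rfl⟩ := h
  exact ⟨(1, w), Sum.inr i, by rw [hr i]; ext <;> simp⟩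

lemma fwd (l : List W) : ∀ u : W, (∀ t ∈ l, cs.IsReflection t) →
    (∀ k < l.length,
      cs.length ((l.take k).foldl (· * ·) u) <
        cs.length ((l.take (k + 1)).foldl (· * ·) u)) →
    bruhatLE cs2 (u, u⁻¹) (l.foldl (· * ·) u, (l.foldl (· * ·) u)⁻¹) := by
  induction l with
  | nil => intro u _ _; simpa using bruhat_refl cs2 (u, u⁻¹)
  | cons t l ih =>
    intro u h1 h3
    have ht : cs.IsReflection t := h1 t List.mem_cons_self
    have h0 : cs.length u < cs.length (u * t) := by simpa using h3 0 (by simp)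
    have h3' : ∀ k < l.length,
        cs.length ((l.take k).foldl (· * ·) (u * t)) <
          cs.length ((l.take (k + 1)).foldl (· * ·) (u * t)) := by
      intro k hk
      simpa [List.take_succ_cons] using h3 (k + 1) (by simpa using hk)
    have key := ih (u * t) (fun x hx => h1 x (List.mem_cons_of_mem t hx)) h3'
    have hfold : (t :: l).foldl (· * ·) u = l.foldl (· * ·) (u * t) := by simp
    rw [hfold]
    apply bruhat_cons cs2 (refl_left cs cs2 hl hr ht)
    · rw [show ((u, u⁻¹) : W × W) * (t, 1) = (u * t, u⁻¹) by ext <;> simp,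
        len2 cs cs2 hl hr, len2 cs cs2 hl hr]
      omega
    rw [show ((u, u⁻¹) : W × W) * (t, 1) = (u * t, u⁻¹) by ext <;> simp]
    apply bruhat_cons cs2 (refl_right cs cs2 hl hr (ht.conj u))
    · rw [show ((u * t, u⁻¹) : W × W) * (1, u * t * u⁻¹) = (u * t, t * u⁻¹) by
        ext <;> simp [mul_assoc],
        len2 cs cs2 hl hr, len2 cs cs2 hl hr, cs.length_inv]
      have : cs.length (t * u⁻¹) = cs.length (u * t) := by
        rw [show t * u⁻¹ = (u * t)⁻¹ by rw [mul_inv_rev, ht.inv], cs.length_inv]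
      omega
    rw [show ((u * t, u⁻¹) : W × W) * (1, u * t * u⁻¹) = (u * t, (u * t)⁻¹) by
      ext <;> simp [mul_assoc, mul_inv_rev, ht.inv]]
    exact key

lemma bwd (L : List (W × W)) : ∀ a b c d : W, (∀ t ∈ L, cs2.IsReflection t) →
    L.foldl (· * ·) (a, b) = (c, d) →
    (∀ k < L.length,
      cs2.length ((L.take k).foldl (· * ·) (a, b)) <
        cs2.length ((L.take (k + 1)).foldl (· * ·) (a, b))) →
    bruhatLE cs a c := by
  induction L with
  | nil =>
    intro a b c d _ h2 _
    obtain ⟨rfl, rfl⟩ := Prod.mk.injEq .. ▸ h2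
    exact bruhat_refl cs a
  | cons t L ih =>
    intro a b c d h1 h2 h3
    have ht : cs2.IsReflection t := h1 t List.mem_cons_self
    have h0 : cs2.length ((a, b) : W × W) < cs2.length ((a, b) * t) := by
      simpa using h3 0 (by simp)
    have h2' : L.foldl (· * ·) ((a, b) * t) = (c, d) := by simpa using h2
    have h3' : ∀ k < L.length,
        cs2.length ((L.take k).foldl (· * ·) ((a, b) * t)) <
          cs2.length ((L.take (k + 1)).foldl (· * ·) ((a, b) * t)) := by
      intro k hk
      simpa [List.take_succ_cons] using h3 (k + 1) (by simpa using hk)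
    have h1' : ∀ x ∈ L, cs2.IsReflection x := fun x hx => h1 x (List.mem_cons_of_mem t hx)
    obtain ⟨⟨w1, w2⟩, i, rfl⟩ := ht
    cases i with
    | inl i =>
      have hform : ((w1, w2) : W × W) * cs2.simple (Sum.inl i) * (w1, w2)⁻¹
          = (w1 * cs.simple i * w1⁻¹, 1) := by rw [hl i]; ext <;> simp
      rw [hform] at h0 h2' h3'
      have hmul : ((a, b) : W × W) * (w1 * cs.simple i * w1⁻¹, 1)
          = (a * (w1 * cs.simple i * w1⁻¹), b) := by ext <;> simp
      rw [hmul] at h0 h2' h3'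
      rw [len2 cs cs2 hl hr, len2 cs cs2 hl hr] at h0
      have hr' : cs.IsReflection (w1 * cs.simple i * w1⁻¹) := ⟨w1, i, rfl⟩
      exact bruhat_cons cs hr' (by omega)
        (ih (a * (w1 * cs.simple i * w1⁻¹)) b c d h1' h2' h3')
    | inr i =>
      have hform : ((w1, w2) : W × W) * cs2.simple (Sum.inr i) * (w1, w2)⁻¹
          = (1, w2 * cs.simple i * w2⁻¹) := by rw [hr i]; ext <;> simp
      rw [hform] at h2' h3'
      have hmul : ((a, b) : W × W) * (1, w2 * cs.simple i * w2⁻¹)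
          = (a, b * (w2 * cs.simple i * w2⁻¹)) := by ext <;> simp
      rw [hmul] at h2' h3'
      exact ih a (b * (w2 * cs.simple i * w2⁻¹)) c d h1' h2' h3'

end Aux

/-- Example 3.9: for `W × W` with the swap automorphism `θ`, the map
`w ↦ (w, w⁻¹)` is a bijection of `W` onto `I(θ)` which is an isomorphism from
the Bruhat order on `W` to the Bruhat order on `I(θ)`. -/
theorem stmt_13 {B W : Type*} [Group W] {M : CoxeterMatrix B}
    (cs : CoxeterSystem M W)
    {M2 : CoxeterMatrix (B ⊕ B)} (cs2 : CoxeterSystem M2 (W × W))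
    (hl : ∀ i : B, cs2.simple (Sum.inl i) = (cs.simple i, 1))
    (hr : ∀ i : B, cs2.simple (Sum.inr i) = (1, cs.simple i)) :
    Set.BijOn (fun w : W => ((w, w⁻¹) : W × W)) Set.univ
      {x : W × W | (MulEquiv.prodComm : W × W ≃* W × W) x = x⁻¹} ∧
    ∀ u v : W, bruhatLE cs u v ↔ bruhatLE cs2 (u, u⁻¹) (v, v⁻¹) := by
  constructor
  · refine ⟨fun w _ => ?_, fun w _ w' _ h => ?_, fun ⟨a, b⟩ hx => ?_⟩
    · simp [MulEquiv.prodComm, Prod.inv_mk]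
    · exact congrArg Prod.fst h
    · simp only [Set.mem_setOf_eq, MulEquiv.prodComm, MulEquiv.coe_mk, Equiv.prodComm_apply,
        Prod.swap_prod_mk, Prod.inv_mk, Prod.mk.injEq] at hx
      exact ⟨a, Set.mem_univ a, by ext <;> simp [hx.1]⟩
  · intro u v
    constructor
    · rintro ⟨l, h1, h2, h3⟩
      have := fwd cs cs2 hl hr l u h1 h3
      rwa [h2] at this
    · rintro ⟨L, h1, h2, h3⟩
      exact bwd cs cs2 hl hr L u u⁻¹ v v⁻¹ h1 h2 h3
end

section
/- For the swap automorphism θ on W × W (W a finite Coxeter group), the weak order Wk(θ) on I(θ) ≅ W corresponds, under the bijection w ↦ (w,w⁻¹), to the two-sided weak order on W: the transitive closure of the union of the left and right weak orders. In particular, (w,w⁻¹)·(s,e)̲ = (ws,(ws)⁻¹) ⪯ (w,w⁻¹) iff s ∈ D_R(w), and (w,w⁻¹)·(e,s)̲ = (sw,(sw)⁻¹) ⪯ (w,w⁻¹) iff s ∈ D_L(w). -/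
/-- The rank `ρ(w)`: the minimal length of an `S̲`-expression for `w`. -/
noncomputable def twRho {B W : Type*} [Group W] {M : CoxeterMatrix B}
    (cs : CoxeterSystem M W) (θ : W ≃* W) (w : W) : ℕ :=
  sInf {k : ℕ | ∃ l : List B, l.length = k ∧ twWord cs θ 1 l = w}

/-- The weak order on twisted involutions: `v ⪯ w` iff `w` is obtained from `v`
by applying symbols, each increasing `ρ` by one. -/
noncomputable def wkLE {B W : Type*} [Group W] {M : CoxeterMatrix B}
    (cs : CoxeterSystem M W) (θ : W ≃* W) (v w : W) : Prop :=
  ∃ l : List B, twWord cs θ v l = w ∧ twRho cs θ w = twRho cs θ v + l.length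

/-- `v` lies in the connected component `wC_J` of `w` in the graph on `I(θ)`
whose edges are given by the actions of `s̲`, `s ∈ J`. -/
def inComponent {B W : Type*} [Group W] {M : CoxeterMatrix B}
    (cs : CoxeterSystem M W) (θ : W ≃* W) (J : Set B) (w v : W) : Prop :=
  Relation.ReflTransGen (fun a b => ∃ i ∈ J, twMul cs θ a i = b) w v

section MyAux

variable {B : Type*} {W : Type*} [Group W] {M : CoxeterMatrix B} (cs : CoxeterSystem M W)
  {M2 : CoxeterMatrix (B ⊕ B)} (cs2 : CoxeterSystem M2 (W × W))

/-- The induced action on the first component. -/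
def myAct (u : W) : B ⊕ B → W
  | Sum.inl i => u * cs.simple i
  | Sum.inr i => cs.simple i * u

theorem mySimple_ne_one (i : B) : cs.simple i ≠ 1 := by
  intro h
  have h1 := cs.length_simple i
  rw [h, cs.length_one] at h1
  omega

variable (hl : ∀ i : B, cs2.simple (Sum.inl i) = (cs.simple i, 1))
  (hr : ∀ i : B, cs2.simple (Sum.inr i) = (1, cs.simple i))

include hl hr

theorem myTwMul (w : W) (j : B ⊕ B) :
    twMul cs2 (MulEquiv.prodComm : W × W ≃* W × W) (w, w⁻¹) j =
      (myAct cs w j, (myAct cs w j)⁻¹) := by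
  cases j with
  | inl i =>
    unfold twMul
    rw [hl i]
    have hθ : (MulEquiv.prodComm : W × W ≃* W × W) (cs.simple i, 1) = (1, cs.simple i) := rfl
    rw [hθ]
    rw [if_neg]
    · show ((1:W) * w * cs.simple i, cs.simple i * w⁻¹ * 1) = _
      simp [myAct, mul_inv_rev, cs.inv_simple]
    · intro h
      have h1 : (1:W) * w * cs.simple i = w := congrArg Prod.fst h
      rw [one_mul] at h1
      exact mySimple_ne_one cs i (mul_left_cancel (a := w) (by rw [h1, mul_one]))
  | inr i =>
    unfold twMul
    rw [hr i]
    have hθ : (MulEquiv.prodComm : W × W ≃* W × W) (1, cs.simple i) = (cs.simple i, 1) := rfl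
    rw [hθ]
    rw [if_neg]
    · show (cs.simple i * w * 1, (1:W) * w⁻¹ * cs.simple i) = _
      simp [myAct, mul_inv_rev, cs.inv_simple]
    · intro h
      have h1 : cs.simple i * w * (1:W) = w := congrArg Prod.fst h
      rw [mul_one] at h1
      exact mySimple_ne_one cs i (mul_right_cancel (b := w) (by rw [h1, one_mul]))

theorem myTwWord (u : W) (l : List (B ⊕ B)) :
    twWord cs2 (MulEquiv.prodComm : W × W ≃* W × W) (u, u⁻¹) l =
      (l.foldl (myAct cs) u, (l.foldl (myAct cs) u)⁻¹) := by
  induction l generalizing u with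
  | nil => rfl
  | cons j t ih =>
    show twWord cs2 _ (twMul cs2 _ (u, u⁻¹) j) t = _
    rw [myTwMul cs cs2 hl hr, ih]
    rfl

end MyAux

section MyAux2

variable {B : Type*} {W : Type*} [Group W] {M : CoxeterMatrix B} (cs : CoxeterSystem M W)

theorem myLen_le (l : List (B ⊕ B)) (u : W) :
    cs.length (l.foldl (myAct cs) u) ≤ cs.length u + l.length := by
  induction l generalizing u with
  | nil => simp
  | cons j t ih =>
    have h1 : cs.length (myAct cs u j) ≤ cs.length u + 1 := by
      cases j with
      | inl i =>
        have := cs.length_mul_le u (cs.simple i)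
        rwa [cs.length_simple] at this
      | inr i =>
        have := cs.length_mul_le (cs.simple i) u
        rwa [cs.length_simple, add_comm] at this
    have h2 := ih (myAct cs u j)
    simp only [List.foldl_cons, List.length_cons]
    omega

theorem myFoldl_inl (u : W) (ω : List B) :
    (ω.map Sum.inl).foldl (myAct cs) u = u * cs.wordProd ω := by
  induction ω generalizing u with
  | nil => simp [cs.wordProd_nil]
  | cons i t ih => simp [List.foldl_cons, ih, cs.wordProd_cons, myAct, mul_assoc]

theorem myFoldl_inr (u : W) (ω : List B) :
    (ω.map Sum.inr).foldl (myAct cs) u = cs.wordProd ω.reverse * u := by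
  induction ω generalizing u with
  | nil => simp
  | cons i t ih =>
    simp only [List.map_cons, List.foldl_cons, List.reverse_cons]
    rw [ih, cs.wordProd_append]
    simp [myAct, cs.wordProd_cons, cs.wordProd_nil, mul_assoc]

end MyAux2

section MyAux3

variable {B : Type*} {W : Type*} [Group W] {M : CoxeterMatrix B} (cs : CoxeterSystem M W)
  {M2 : CoxeterMatrix (B ⊕ B)} (cs2 : CoxeterSystem M2 (W × W))
  (hl : ∀ i : B, cs2.simple (Sum.inl i) = (cs.simple i, 1))
  (hr : ∀ i : B, cs2.simple (Sum.inr i) = (1, cs.simple i))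

include hl hr

theorem myRho (u : W) :
    twRho cs2 (MulEquiv.prodComm : W × W ≃* W × W) (u, u⁻¹) = cs.length u := by
  have hone : (1 : W × W) = ((1 : W), (1 : W)⁻¹) := by simp; rfl
  have hmem : cs.length u ∈ {k : ℕ | ∃ l : List (B ⊕ B), l.length = k ∧
      twWord cs2 (MulEquiv.prodComm : W × W ≃* W × W) 1 l = (u, u⁻¹)} := by
    obtain ⟨ω, hω, hπ⟩ := cs.exists_reduced_word u
    refine ⟨ω.map Sum.inl, by simpa [← hπ] using hω.eq.symm, ?_⟩
    rw [hone, myTwWord cs cs2 hl hr, myFoldl_inl, one_mul, ← hπ]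
  have hlb : ∀ k ∈ {k : ℕ | ∃ l : List (B ⊕ B), l.length = k ∧
      twWord cs2 (MulEquiv.prodComm : W × W ≃* W × W) 1 l = (u, u⁻¹)},
      cs.length u ≤ k := by
    rintro k ⟨l, rfl, hw⟩
    rw [hone, myTwWord cs cs2 hl hr] at hw
    have hfu : l.foldl (myAct cs) 1 = u := congrArg Prod.fst hw
    have := myLen_le cs l 1
    rw [hfu, cs.length_one, zero_add] at this
    exact this
  exact le_antisymm (Nat.sInf_le hmem) (hlb _ (Nat.sInf_mem ⟨_, hmem⟩))

theorem myWkLE_iff (u v : W) :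
    wkLE cs2 (MulEquiv.prodComm : W × W ≃* W × W) (u, u⁻¹) (v, v⁻¹) ↔
      ∃ l : List (B ⊕ B), l.foldl (myAct cs) u = v ∧
        cs.length v = cs.length u + l.length := by
  unfold wkLE
  constructor
  · rintro ⟨l, hw, hrho⟩
    rw [myTwWord cs cs2 hl hr] at hw
    refine ⟨l, congrArg Prod.fst hw, ?_⟩
    rwa [myRho cs cs2 hl hr, myRho cs cs2 hl hr] at hrho
  · rintro ⟨l, hfold, hlen⟩
    refine ⟨l, ?_, ?_⟩
    · rw [myTwWord cs cs2 hl hr, hfold]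
    · rw [myRho cs cs2 hl hr, myRho cs cs2 hl hr]; exact hlen

end MyAux3

section MyAux4

variable {B : Type*} {W : Type*} [Group W] {M : CoxeterMatrix B} (cs : CoxeterSystem M W)

theorem myDecomp (l : List (B ⊕ B)) (u v : W) (hf : l.foldl (myAct cs) u = v)
    (hlen : cs.length v = cs.length u + l.length) :
    Relation.ReflTransGen
      (fun a b : W => cs.length b = cs.length a + cs.length (a⁻¹ * b) ∨
        cs.length b = cs.length a + cs.length (b * a⁻¹)) u v := by
  induction l generalizing u with
  | nil =>
    simp only [List.foldl_nil] at hf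
    exact hf ▸ Relation.ReflTransGen.refl
  | cons j t ih =>
    have h1 : cs.length (myAct cs u j) ≤ cs.length u + 1 := by
      cases j with
      | inl i =>
        have := cs.length_mul_le u (cs.simple i)
        rwa [cs.length_simple] at this
      | inr i =>
        have := cs.length_mul_le (cs.simple i) u
        rwa [cs.length_simple, add_comm] at this
    simp only [List.foldl_cons] at hf
    have h2 : cs.length v ≤ cs.length (myAct cs u j) + t.length := hf ▸ myLen_le cs t _
    simp only [List.length_cons] at hlen
    have h3 : cs.length (myAct cs u j) = cs.length u + 1 := by omega
    have h4 : cs.length v = cs.length (myAct cs u j) + t.length := by omega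
    refine Relation.ReflTransGen.head ?_ (ih (myAct cs u j) hf h4)
    cases j with
    | inl i =>
      left
      have he : u⁻¹ * myAct cs u (Sum.inl i) = cs.simple i := by
        simp [myAct]
      rw [he, cs.length_simple]
      exact h3
    | inr i =>
      right
      have he : myAct cs u (Sum.inr i) * u⁻¹ = cs.simple i := by
        simp [myAct]
      rw [he, cs.length_simple]
      exact h3

theorem mySingle (a b : W)
    (h : cs.length b = cs.length a + cs.length (a⁻¹ * b) ∨
      cs.length b = cs.length a + cs.length (b * a⁻¹)) :
    ∃ l : List (B ⊕ B), l.foldl (myAct cs) a = b ∧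
      cs.length b = cs.length a + l.length := by
  rcases h with h | h
  · obtain ⟨ω, hω, hπ⟩ := cs.exists_reduced_word (a⁻¹ * b)
    refine ⟨ω.map Sum.inl, ?_, ?_⟩
    · rw [myFoldl_inl, ← hπ, mul_inv_cancel_left]
    · simpa [← hω.eq, ← hπ] using h
  · obtain ⟨ω, hω, hπ⟩ := cs.exists_reduced_word (b * a⁻¹)
    refine ⟨(ω.reverse).map Sum.inr, ?_, ?_⟩
    · rw [myFoldl_inr, List.reverse_reverse, ← hπ, inv_mul_cancel_right]
    · simpa [← hω.eq, ← hπ] using h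

end MyAux4

/-- Example 5.2: for `W × W` with the swap automorphism, the weak order on
`I(θ) ≅ W` corresponds, under `w ↦ (w, w⁻¹)`, to the two-sided weak order on
`W` (the transitive closure of the union of the left and right weak orders);
in particular `(w,w⁻¹)·(s,e)̲ = (ws,(ws)⁻¹) ⪯ (w,w⁻¹)` iff `s ∈ D_R(w)` and
`(w,w⁻¹)·(e,s)̲ = (sw,(sw)⁻¹) ⪯ (w,w⁻¹)` iff `s ∈ D_L(w)`. -/


theorem stmt_19 {B : Type*} [Finite B] {W : Type*} [Group W] [Finite W]
    {M : CoxeterMatrix B} (cs : CoxeterSystem M W)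
    {M2 : CoxeterMatrix (B ⊕ B)} (cs2 : CoxeterSystem M2 (W × W))
    (hl : ∀ i : B, cs2.simple (Sum.inl i) = (cs.simple i, 1))
    (hr : ∀ i : B, cs2.simple (Sum.inr i) = (1, cs.simple i)) :
    (∀ (w : W) (i : B),
      twMul cs2 (MulEquiv.prodComm : W × W ≃* W × W) (w, w⁻¹) (Sum.inl i) =
        (w * cs.simple i, (w * cs.simple i)⁻¹)) ∧
    (∀ (w : W) (i : B),
      twMul cs2 (MulEquiv.prodComm : W × W ≃* W × W) (w, w⁻¹) (Sum.inr i) =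
        (cs.simple i * w, (cs.simple i * w)⁻¹)) ∧
    (∀ (w : W) (i : B),
      wkLE cs2 (MulEquiv.prodComm : W × W ≃* W × W)
          (w * cs.simple i, (w * cs.simple i)⁻¹) (w, w⁻¹) ↔
        cs.IsRightDescent w i) ∧
    (∀ (w : W) (i : B),
      wkLE cs2 (MulEquiv.prodComm : W × W ≃* W × W)
          (cs.simple i * w, (cs.simple i * w)⁻¹) (w, w⁻¹) ↔
        cs.IsLeftDescent w i) ∧
    (∀ u v : W,
      wkLE cs2 (MulEquiv.prodComm : W × W ≃* W × W) (u, u⁻¹) (v, v⁻¹) ↔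
        Relation.ReflTransGen
          (fun a b : W => cs.length b = cs.length a + cs.length (a⁻¹ * b) ∨
            cs.length b = cs.length a + cs.length (b * a⁻¹)) u v) := by
  refine ⟨fun w i => myTwMul cs cs2 hl hr w (Sum.inl i),
    fun w i => myTwMul cs cs2 hl hr w (Sum.inr i), ?_, ?_, ?_⟩
  · intro w i
    rw [myWkLE_iff cs cs2 hl hr]
    constructor
    · rintro ⟨l, hf, hlen⟩
      by_contra hnd
      have h1 : cs.length (w * cs.simple i) = cs.length w + 1 :=
        (cs.not_isRightDescent_iff).mp hnd
      omega
    · intro h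
      have h1 : cs.length (w * cs.simple i) + 1 = cs.length w :=
        (cs.isRightDescent_iff).mp h
      refine ⟨[Sum.inl i], ?_, by simpa using h1.symm⟩
      simp [myAct, mul_assoc, cs.simple_mul_simple_self]
  · intro w i
    rw [myWkLE_iff cs cs2 hl hr]
    constructor
    · rintro ⟨l, hf, hlen⟩
      by_contra hnd
      have h1 : cs.length (cs.simple i * w) = cs.length w + 1 :=
        (cs.not_isLeftDescent_iff).mp hnd
      omega
    · intro h
      have h1 : cs.length (cs.simple i * w) + 1 = cs.length w :=
        (cs.isLeftDescent_iff).mp h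
      refine ⟨[Sum.inr i], ?_, by simpa using h1.symm⟩
      simp [myAct, ← mul_assoc, cs.simple_mul_simple_self]
  · intro u v
    rw [myWkLE_iff cs cs2 hl hr]
    constructor
    · rintro ⟨l, hf, hlen⟩
      exact myDecomp cs l u v hf hlen
    · intro h
      induction h with
      | refl => exact ⟨[], by simp, by simp⟩
      | tail h1 h2 ih =>
        obtain ⟨l1, hf1, hlen1⟩ := ih
        obtain ⟨l2, hf2, hlen2⟩ := mySingle cs _ _ h2
        refine ⟨l1 ++ l2, ?_, ?_⟩
        · rw [List.foldl_append, hf1, hf2]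
        · simp only [List.length_append]; omega
end
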